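/- arXiv:1206.1965 — 5 statements merged into one kernel-verified Lean document; each statement's English description precedes it below -/
import Mathlib

section
/- Let A, B ⊆ ℝ be nonempty Borel sets with finite positive measure, and let δ > 0 satisfy δ < min(|A|,|B|). If |A+B| < |A| + |B| + δ, then there exist intervals I, J with A ⊆ I, B ⊆ J, |I| < |A| + δ, and |J| < |B| + δ. -/
open MeasureTheory Set
open scoped Pointwise ENNReal

namespace Stmt0Proof

lemma cell_cover {τ u : ℝ} {p : ℕ} (hp : 0 < p) (hu : u = τ / p) (hτ : 0 < τ)
    {a : ℝ} (ha : a ∈ Icc (0:ℝ) τ) :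
    ∃ n : ℕ, n < p ∧ a ∈ Icc ((n:ℝ) * u) ((n:ℝ) * u + u) := by
  have hu0 : 0 < u := by
    rw [hu]; positivity
  have hpu : (p : ℝ) * u = τ := by
    rw [hu]; field_simp
  have hdiv0 : 0 ≤ a / u := div_nonneg ha.1 hu0.le
  by_cases hcase : Nat.floor (a / u) < p
  · refine ⟨Nat.floor (a / u), hcase, ?_, ?_⟩
    · calc ((Nat.floor (a/u) : ℝ)) * u ≤ (a / u) * u := by
            exact mul_le_mul_of_nonneg_right (Nat.floor_le hdiv0) hu0.le
        _ = a := by field_simp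
    · have h1 : a / u < Nat.floor (a/u) + 1 := Nat.lt_floor_add_one _
      have := mul_lt_mul_of_pos_right h1 hu0
      rw [div_mul_cancel₀ _ hu0.ne'] at this
      nlinarith
  · push_neg at hcase
    have hple : (p : ℝ) ≤ a / u := by
      exact_mod_cast (Nat.le_floor_iff hdiv0).mp hcase
    have haτ : τ ≤ a := by
      have := mul_le_mul_of_nonneg_right hple hu0.le
      rw [div_mul_cancel₀ _ hu0.ne'] at this
      linarith [hpu]
    have haeq : a = τ := le_antisymm ha.2 haτ
    refine ⟨p - 1, Nat.sub_lt hp one_pos, ?_, ?_⟩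
    · have : ((p - 1 : ℕ) : ℝ) = (p : ℝ) - 1 := by
        have : (1:ℕ) ≤ p := hp
        push_cast [Nat.cast_sub this]; ring
      rw [this, haeq]
      nlinarith
    · have : ((p - 1 : ℕ) : ℝ) = (p : ℝ) - 1 := by
        have : (1:ℕ) ≤ p := hp
        push_cast [Nat.cast_sub this]; ring
      rw [this, haeq]
      nlinarith


set_option maxHeartbeats 1000000 in
open Classical in
lemma grid_step {p : ℕ} (hp : p.Prime) {τ u : ℝ} (hτ : 0 < τ) (hu : u = τ / p)
    {P Q F : Set ℝ} (hPne : P.Nonempty) (hQne : Q.Nonempty)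
    (hP : P ⊆ Icc 0 τ) (hQ : Q ⊆ Icc 0 τ)
    (hF : ∀ x ∈ P, ∀ y ∈ Q, Icc (x + y - 2*u) (x + y + 2*u) ⊆ F) :
    min (ENNReal.ofReal τ) (volume P + volume Q)
      ≤ volume {z : ℝ | z ∈ Ico 0 τ ∧ (z ∈ F ∨ z + τ ∈ F)} + ENNReal.ofReal u := by
  haveI : NeZero p := ⟨hp.pos.ne'⟩
  have hp0 : 0 < p := hp.pos
  have hu0 : 0 < u := by rw [hu]; positivity
  have hpu : (p : ℝ) * u = τ := by rw [hu]; field_simp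
  set IP : Finset (ZMod p) :=
    Finset.univ.filter (fun i => (Icc ((i.val:ℝ)*u) ((i.val:ℝ)*u+u) ∩ P).Nonempty) with hIP
  set IQ : Finset (ZMod p) :=
    Finset.univ.filter (fun i => (Icc ((i.val:ℝ)*u) ((i.val:ℝ)*u+u) ∩ Q).Nonempty) with hIQ
  have cover : ∀ (X : Set ℝ), X ⊆ Icc 0 τ →
      volume X ≤ (Finset.univ.filter
        (fun i : ZMod p => (Icc ((i.val:ℝ)*u) ((i.val:ℝ)*u+u) ∩ X).Nonempty)).card
          * ENNReal.ofReal u := by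
    intro X hX
    set IX := Finset.univ.filter
        (fun i : ZMod p => (Icc ((i.val:ℝ)*u) ((i.val:ℝ)*u+u) ∩ X).Nonempty) with hIX
    have hsub : X ⊆ ⋃ i ∈ IX, Icc ((i.val:ℝ)*u) ((i.val:ℝ)*u+u) := by
      intro a haX
      obtain ⟨n, hnp, hcell⟩ := cell_cover hp0 hu hτ (hX haX)
      have hval : ((n : ZMod p)).val = n := ZMod.val_cast_of_lt hnp
      have hmem : (n : ZMod p) ∈ IX := by
        rw [hIX]
        simp only [Finset.mem_filter, Finset.mem_univ, true_and]
        exact ⟨a, by rw [hval]; exact hcell, haX⟩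
      exact Set.mem_biUnion hmem (by rw [hval]; exact hcell)
    calc volume X ≤ volume (⋃ i ∈ IX, Icc ((i.val:ℝ)*u) ((i.val:ℝ)*u+u)) :=
          measure_mono hsub
      _ ≤ ∑ i ∈ IX, volume (Icc ((i.val:ℝ)*u) ((i.val:ℝ)*u+u)) :=
          measure_biUnion_finset_le _ _
      _ = ∑ _i ∈ IX, ENNReal.ofReal u := by
          refine Finset.sum_congr rfl fun i _ => ?_
          rw [Real.volume_Icc]; ring_nf
      _ = IX.card * ENNReal.ofReal u := by
          rw [Finset.sum_const, nsmul_eq_mul]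
  have coverP := cover P hP
  have coverQ := cover Q hQ
  rw [← hIP] at coverP
  rw [← hIQ] at coverQ
  have hIPne : IP.Nonempty := by
    obtain ⟨a, haP⟩ := hPne
    obtain ⟨n, hnp, hcell⟩ := cell_cover hp0 hu hτ (hP haP)
    have hval : ((n : ZMod p)).val = n := ZMod.val_cast_of_lt hnp
    exact ⟨(n : ZMod p), by
      rw [hIP]; simp only [Finset.mem_filter, Finset.mem_univ, true_and]
      exact ⟨a, by rw [hval]; exact hcell, haP⟩⟩
  have hIQne : IQ.Nonempty := by
    obtain ⟨a, haQ⟩ := hQne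
    obtain ⟨n, hnp, hcell⟩ := cell_cover hp0 hu hτ (hQ haQ)
    have hval : ((n : ZMod p)).val = n := ZMod.val_cast_of_lt hnp
    exact ⟨(n : ZMod p), by
      rw [hIQ]; simp only [Finset.mem_filter, Finset.mem_univ, true_and]
      exact ⟨a, by rw [hval]; exact hcell, haQ⟩⟩
  have hCD : min p (IP.card + IQ.card - 1) ≤ (IP + IQ).card :=
    ZMod.cauchy_davenport hp hIPne hIQne
  have hcells : ∀ s ∈ IP + IQ,
      Ico ((s.val:ℝ)*u) ((s.val:ℝ)*u+u) ⊆ {z : ℝ | z ∈ Ico 0 τ ∧ (z ∈ F ∨ z + τ ∈ F)} := by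
    intro s hs
    rw [Finset.mem_add] at hs
    obtain ⟨i, hi, j, hj, hij⟩ := hs
    rw [hIP] at hi; rw [hIQ] at hj
    simp only [Finset.mem_filter, Finset.mem_univ, true_and] at hi hj
    obtain ⟨x, hxc, hxP⟩ := hi
    obtain ⟨y, hyc, hyQ⟩ := hj
    have hvi : i.val < p := ZMod.val_lt i
    have hvj : j.val < p := ZMod.val_lt j
    have hsum : s.val = (i.val + j.val) % p := by rw [← hij, ZMod.val_add]
    intro z hz
    have hzc : z ∈ Ico ((s.val:ℝ)*u) ((s.val:ℝ)*u+u) := hz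
    have hsp : s.val < p := ZMod.val_lt s
    have hz0 : (0:ℝ) ≤ z := le_trans (by positivity) hzc.1
    have hzτ : z < τ := by
      have h1 : (s.val:ℝ)*u + u ≤ (p:ℝ)*u := by
        have : (s.val:ℝ) + 1 ≤ (p:ℝ) := by exact_mod_cast hsp
        nlinarith
      calc z < (s.val:ℝ)*u + u := hzc.2
        _ ≤ (p:ℝ)*u := h1
        _ = τ := hpu
    refine ⟨⟨hz0, hzτ⟩, ?_⟩
    have h1 : (i.val:ℝ)*u ≥ x - u := by nlinarith [hxc.2]
    have h2 : (j.val:ℝ)*u ≥ y - u := by nlinarith [hyc.2]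
    have h3 : (i.val:ℝ)*u ≤ x := hxc.1
    have h4 : (j.val:ℝ)*u ≤ y := hyc.1
    by_cases hlt : i.val + j.val < p
    · left
      have hsv : s.val = i.val + j.val := by rw [hsum, Nat.mod_eq_of_lt hlt]
      have hse : (s.val:ℝ)*u = (i.val:ℝ)*u + (j.val:ℝ)*u := by
        rw [hsv]; push_cast; ring
      refine hF x hxP y hyQ ⟨by nlinarith [hzc.1], by nlinarith [hzc.2]⟩
    · right
      push_neg at hlt
      have hsv : s.val + p = i.val + j.val := by
        have h1 : (i.val + j.val) % p = i.val + j.val - p := by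
          rw [Nat.mod_eq_sub_mod hlt, Nat.mod_eq_of_lt (by omega)]
        omega
      have hse : (s.val:ℝ)*u + τ = (i.val:ℝ)*u + (j.val:ℝ)*u := by
        rw [← hpu]
        have : (s.val:ℝ) + (p:ℝ) = (i.val:ℝ) + (j.val:ℝ) := by exact_mod_cast hsv
        nlinarith
      refine hF x hxP y hyQ ⟨by nlinarith [hzc.1], by nlinarith [hzc.2]⟩
  -- lower bound for the wrapped set by the disjoint cells
  have hdisj : (↑(IP + IQ) : Set (ZMod p)).PairwiseDisjoint
      (fun s : ZMod p => Ico ((s.val:ℝ)*u) ((s.val:ℝ)*u+u)) := by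
    intro s _ t _ hst
    have hv : s.val ≠ t.val := fun h => hst (ZMod.val_injective p h)
    rcases lt_or_gt_of_ne hv with h | h
    · apply Set.disjoint_left.mpr
      intro z hz1 hz2
      have : (s.val:ℝ) + 1 ≤ (t.val:ℝ) := by exact_mod_cast h
      have := hz1.2; have := hz2.1
      nlinarith
    · apply Set.disjoint_left.mpr
      intro z hz1 hz2
      have : (t.val:ℝ) + 1 ≤ (s.val:ℝ) := by exact_mod_cast h
      have := hz1.1; have := hz2.2
      nlinarith
  have hvol : ((IP + IQ).card : ℝ≥0∞) * ENNReal.ofReal u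
      ≤ volume {z : ℝ | z ∈ Ico 0 τ ∧ (z ∈ F ∨ z + τ ∈ F)} := by
    calc ((IP + IQ).card : ℝ≥0∞) * ENNReal.ofReal u
        = ∑ _s ∈ IP + IQ, ENNReal.ofReal u := by
          rw [Finset.sum_const, nsmul_eq_mul]
      _ = ∑ s ∈ IP + IQ, volume (Ico ((s.val:ℝ)*u) ((s.val:ℝ)*u+u)) := by
          refine Finset.sum_congr rfl fun s _ => ?_
          rw [Real.volume_Ico]; ring_nf
      _ = volume (⋃ s ∈ IP + IQ, Ico ((s.val:ℝ)*u) ((s.val:ℝ)*u+u)) :=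
          (measure_biUnion_finset hdisj (fun s _ => measurableSet_Ico)).symm
      _ ≤ volume {z : ℝ | z ∈ Ico 0 τ ∧ (z ∈ F ∨ z + τ ∈ F)} := by
          refine measure_mono ?_
          exact Set.iUnion₂_subset hcells
  -- finish with the two cases of Cauchy-Davenport
  rcases le_total (p : ℕ) (IP.card + IQ.card - 1) with hc | hc
  · have : (p : ℝ≥0∞) * ENNReal.ofReal u ≤ ((IP + IQ).card : ℝ≥0∞) * ENNReal.ofReal u := by
      gcongr
      exact_mod_cast le_trans (by simp [hc]) hCD
    have hτle : ENNReal.ofReal τ ≤ volume {z : ℝ | z ∈ Ico 0 τ ∧ (z ∈ F ∨ z + τ ∈ F)} := by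
      calc ENNReal.ofReal τ = ENNReal.ofReal ((p:ℝ) * u) := by rw [hpu]
        _ = (p : ℝ≥0∞) * ENNReal.ofReal u := by
            rw [ENNReal.ofReal_mul (by positivity)]
            congr 1
            exact ENNReal.ofReal_natCast p
        _ ≤ ((IP + IQ).card : ℝ≥0∞) * ENNReal.ofReal u := this
        _ ≤ _ := hvol
    exact le_trans (min_le_left _ _) (le_trans hτle le_self_add)
  · have hcard : IP.card + IQ.card ≤ (IP + IQ).card + 1 := by
      have := hCD
      rw [min_eq_right hc] at this
      omega
    have : volume P + volume Q ≤ ((IP.card + IQ.card : ℕ) : ℝ≥0∞) * ENNReal.ofReal u := by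
      push_cast
      calc volume P + volume Q ≤ (IP.card : ℝ≥0∞) * ENNReal.ofReal u
            + (IQ.card : ℝ≥0∞) * ENNReal.ofReal u := add_le_add coverP coverQ
        _ = ((IP.card : ℝ≥0∞) + (IQ.card : ℝ≥0∞)) * ENNReal.ofReal u := by ring
    refine le_trans (min_le_right _ _) (le_trans this ?_)
    calc ((IP.card + IQ.card : ℕ) : ℝ≥0∞) * ENNReal.ofReal u
        ≤ (((IP + IQ).card + 1 : ℕ) : ℝ≥0∞) * ENNReal.ofReal u :=
          mul_le_mul_left (by exact_mod_cast hcard) _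
      _ = ((IP + IQ).card : ℝ≥0∞) * ENNReal.ofReal u + ENNReal.ofReal u := by
          push_cast; ring
      _ ≤ _ := add_le_add_left hvol _


lemma cd_limit {P Q : Set ℝ} (hPc : IsCompact P) (hQc : IsCompact Q)
    (hPne : P.Nonempty) (hQne : Q.Nonempty) {τ : ℝ} (hτ : 0 < τ)
    (hP : P ⊆ Icc 0 τ) (hQ : Q ⊆ Icc 0 τ) :
    min (ENNReal.ofReal τ) (volume P + volume Q)
      ≤ volume {z : ℝ | z ∈ Ico 0 τ ∧ (z ∈ P + Q ∨ z + τ ∈ P + Q)} := by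
  set S : Set ℝ := P + Q with hS
  have hSc : IsCompact S := hPc.add hQc
  set F : ℕ → Set ℝ := fun n => S + Icc (-(2/((n:ℝ)+1))) (2/((n:ℝ)+1)) with hF
  have hFc : ∀ n, IsCompact (F n) := fun n => hSc.add isCompact_Icc
  have hFanti : Antitone F := by
    intro a b hab
    have h1 : (2:ℝ)/((b:ℝ)+1) ≤ 2/((a:ℝ)+1) := by
      have hab' : (a:ℝ) + 1 ≤ (b:ℝ) + 1 := by exact_mod_cast Nat.add_le_add_right hab 1
      rw [div_le_div_iff₀ (by positivity) (by positivity)]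
      nlinarith
    exact Set.add_subset_add_left (Set.Icc_subset_Icc (by linarith) h1)
  have hSF : ∀ n, S ⊆ F n := by
    intro n s hs
    have h0 : (0:ℝ) ∈ Icc (-(2/((n:ℝ)+1))) (2/((n:ℝ)+1)) := by
      exact ⟨neg_nonpos.mpr (by positivity), by positivity⟩
    have : s = s + 0 := by ring
    rw [this]
    exact Set.add_mem_add hs h0
  have hFS : (⋂ n, F n) = S := by
    apply Subset.antisymm
    · intro w hw
      rw [← hSc.isClosed.closure_eq]
      rw [Metric.mem_closure_iff]
      intro ε hε
      obtain ⟨n, hn⟩ := exists_nat_gt (2/ε)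
      have hw' := Set.mem_iInter.mp hw n
      rw [hF] at hw'
      obtain ⟨s, hs, e, he, hw''⟩ := Set.mem_add.mp hw'
      refine ⟨s, hs, ?_⟩
      have hn0 : (0:ℝ) < (n:ℝ)+1 := by positivity
      have h1 : |e| ≤ 2/((n:ℝ)+1) := abs_le.mpr ⟨by linarith [he.1], he.2⟩
      have h2 : (2:ℝ)/ε < n+1 := by linarith
      have h3 : 2/((n:ℝ)+1) < ε := by
        rw [div_lt_iff₀ hε] at h2
        rw [div_lt_iff₀ hn0]
        linarith
      have hd : dist w s = |e| := by
        rw [Real.dist_eq]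
        have : w - s = e := by linarith [hw'']
        rw [this]
      rw [hd]
      linarith
    · exact Set.subset_iInter hSF
  -- the wrapped sets
  set V : ℕ → Set ℝ := fun n => {z : ℝ | z ∈ Ico 0 τ ∧ (z ∈ F n ∨ z + τ ∈ F n)} with hV
  have hVmeas : ∀ n, MeasurableSet (V n) := by
    intro n
    have : V n = Ico 0 τ ∩ ((F n) ∪ ((fun z => z + τ) ⁻¹' (F n))) := by
      ext z
      simp only [hV, Set.mem_setOf_eq, Set.mem_inter_iff, Set.mem_union, Set.mem_preimage]
    rw [this]
    exact measurableSet_Ico.inter (((hFc n).isClosed.measurableSet).union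
      ((measurable_add_const τ) ((hFc n).isClosed.measurableSet)))
  have hVanti : Antitone V := by
    intro a b hab z hz
    exact ⟨hz.1, hz.2.imp (fun h => hFanti hab h) (fun h => hFanti hab h)⟩
  have hViInter : (⋂ n, V n) = {z : ℝ | z ∈ Ico 0 τ ∧ (z ∈ S ∨ z + τ ∈ S)} := by
    apply Subset.antisymm
    · intro z hz
      have h1 := Set.mem_iInter.mp hz 0
      refine ⟨h1.1, ?_⟩
      by_cases hzS : ∀ n, z ∈ F n
      · left; rw [← hFS]; exact Set.mem_iInter.mpr hzS
      · push_neg at hzS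
        obtain ⟨n₀, hn₀⟩ := hzS
        right
        rw [← hFS]
        apply Set.mem_iInter.mpr
        intro n
        have h2 := (Set.mem_iInter.mp hz (max n n₀)).2
        rcases h2 with h | h
        · exact absurd (hFanti (le_max_right n n₀) h) hn₀
        · exact hFanti (le_max_left n n₀) h
    · intro z hz
      apply Set.mem_iInter.mpr
      intro n
      exact ⟨hz.1, hz.2.imp (fun h => hSF n h) (fun h => hSF n h)⟩
  -- each V n has the lower bound
  have hVlow : ∀ n, min (ENNReal.ofReal τ) (volume P + volume Q) ≤ volume (V n) := by
    intro n
    apply ENNReal.le_of_forall_pos_le_add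
    intro ε hε _
    have hεR : (0:ℝ) < (ε:ℝ) := hε
    obtain ⟨p, hpge, hp⟩ := Nat.exists_infinite_primes
      (max (Nat.ceil (τ*((n:ℝ)+1))) (Nat.ceil (τ/(ε:ℝ))) + 1)
    have hp1 : (Nat.ceil (τ*((n:ℝ)+1))) < p := by omega
    have hp2 : (Nat.ceil (τ/(ε:ℝ))) < p := by omega
    have hpp : (0:ℝ) < p := by exact_mod_cast hp.pos
    set u : ℝ := τ / p with hu
    have hu0 : 0 < u := by rw [hu]; positivity
    have hule : u ≤ 1/((n:ℝ)+1) := by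
      rw [hu, div_le_div_iff₀ hpp (by positivity)]
      have : τ*((n:ℝ)+1) ≤ (Nat.ceil (τ*((n:ℝ)+1)) : ℝ) := Nat.le_ceil _
      have h2 : (Nat.ceil (τ*((n:ℝ)+1)) : ℝ) < p := by exact_mod_cast hp1
      linarith
    have huε : ENNReal.ofReal u ≤ (ε : ℝ≥0∞) := by
      have h2 : (Nat.ceil (τ/(ε:ℝ)) : ℝ) < p := by exact_mod_cast hp2
      have h3 : τ/(ε:ℝ) ≤ (Nat.ceil (τ/(ε:ℝ)) : ℝ) := Nat.le_ceil _
      have h4 : u ≤ (ε:ℝ) := by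
        rw [hu, div_le_iff₀ hpp]
        rw [div_le_iff₀ hεR] at h3
        nlinarith
      calc ENNReal.ofReal u ≤ ENNReal.ofReal (ε:ℝ) := ENNReal.ofReal_le_ofReal h4
        _ = (ε : ℝ≥0∞) := ENNReal.ofReal_coe_nnreal
    have hFn : ∀ x ∈ P, ∀ y ∈ Q, Icc (x + y - 2*u) (x + y + 2*u) ⊆ F n := by
      intro x hx y hy z hz
      have hxy : x + y ∈ S := Set.add_mem_add hx hy
      have : z = (x+y) + (z - (x+y)) := by ring
      rw [this]
      apply Set.add_mem_add hxy
      have h2u : 2*u ≤ 2/((n:ℝ)+1) := by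
        have h1 : u * ((n:ℝ)+1) ≤ 1 := (le_div_iff₀ (by positivity)).mp hule
        rw [le_div_iff₀ (by positivity)]
        nlinarith [h1]
      constructor
      · have := hz.1; simp only [neg_le]; linarith
      · have := hz.2; linarith
    have := grid_step hp hτ hu hPne hQne hP hQ hFn
    calc min (ENNReal.ofReal τ) (volume P + volume Q)
        ≤ volume (V n) + ENNReal.ofReal u := this
      _ ≤ volume (V n) + ε := add_le_add_right huε _
  -- conclude by continuity from above
  have hfin : ∃ n, volume (V n) ≠ ⊤ := by
    refine ⟨0, ?_⟩
    have hsub : V 0 ⊆ Ico 0 τ := fun z hz => hz.1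
    have hIco : volume (Ico (0:ℝ) τ) ≠ ⊤ := by
      rw [Real.volume_Ico]; exact ENNReal.ofReal_ne_top
    exact ne_top_of_le_ne_top hIco (measure_mono hsub)
  have := hVanti.measure_iInter (fun n => (hVmeas n).nullMeasurableSet) hfin
  rw [hViInter] at this
  rw [this]
  exact le_iInf hVlow


lemma unionIco {τ : ℝ} (hτ : 0 < τ) (N : ℕ) :
    (⋃ r ∈ Finset.range N, Ico ((r:ℝ)*τ) ((r:ℝ)*τ+τ)) = Ico 0 ((N:ℝ)*τ) := by
  apply Subset.antisymm
  · refine Set.iUnion₂_subset fun r hr => ?_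
    have hrN : (r:ℝ) + 1 ≤ (N:ℝ) := by
      exact_mod_cast Finset.mem_range.mp hr
    intro x hx
    refine ⟨le_trans (by positivity) hx.1, ?_⟩
    calc x < (r:ℝ)*τ + τ := hx.2
      _ = ((r:ℝ)+1)*τ := by ring
      _ ≤ (N:ℝ)*τ := by nlinarith
  · intro x hx
    have hx0 : 0 ≤ x / τ := div_nonneg hx.1 hτ.le
    set r := Nat.floor (x/τ) with hr
    have hrN : r < N := by
      have h1 : x/τ < (N:ℝ) := by
        rw [div_lt_iff₀ hτ]; linarith [hx.2]
      exact (Nat.floor_lt hx0).mpr h1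
    refine Set.mem_biUnion (Finset.mem_range.mpr hrN) ?_
    have hfl : (r:ℝ) ≤ x / τ := Nat.floor_le hx0
    have hfl2 : x / τ < (r:ℝ) + 1 := Nat.lt_floor_add_one _
    have hxd : (x/τ)*τ = x := by field_simp
    constructor
    · nlinarith
    · nlinarith

lemma counting {X Y : Set ℝ} (hXc : IsCompact X) (hYc : IsCompact Y)
    {τ : ℝ} (hτ : 0 < τ) (h0Y : (0:ℝ) ∈ Y) (hτY : τ ∈ Y) (R : ℕ)
    (hXsub : X ⊆ Ico 0 (((R:ℝ)+1)*τ)) :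
    volume X + volume {z : ℝ | z ∈ Ico 0 τ ∧ ∃ r : ℕ, r ≤ R + 1 ∧ z + (r:ℝ)*τ ∈ X + Y}
      ≤ volume (X + Y) := by
  set S : Set ℝ := X + Y with hS
  have hSc : IsCompact S := hXc.add hYc
  set Sr : ℕ → Set ℝ := fun r => ((fun z => z + (r:ℝ)*τ) ⁻¹' S) ∩ Ico 0 τ with hSr
  set Xr : ℕ → Set ℝ := fun r => ((fun z => z + (r:ℝ)*τ) ⁻¹' X) ∩ Ico 0 τ with hXr
  have hXmeas : MeasurableSet X := hXc.isClosed.measurableSet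
  have hSmeas : MeasurableSet S := hSc.isClosed.measurableSet
  have hSrm : ∀ r, MeasurableSet (Sr r) := fun r =>
    ((measurable_add_const _) hSmeas).inter measurableSet_Ico
  have hXrm : ∀ r, MeasurableSet (Xr r) := fun r =>
    ((measurable_add_const _) hXmeas).inter measurableSet_Ico
  -- slice measure identity
  have slice : ∀ (T : Set ℝ), MeasurableSet T → ∀ r : ℕ,
      volume (((fun z => z + (r:ℝ)*τ) ⁻¹' T) ∩ Ico 0 τ) = volume (T ∩ Ico ((r:ℝ)*τ) ((r:ℝ)*τ+τ)) := by
    intro T hT r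
    have : ((fun z => z + (r:ℝ)*τ) ⁻¹' T) ∩ Ico 0 τ
        = (fun z => z + (r:ℝ)*τ) ⁻¹' (T ∩ Ico ((r:ℝ)*τ) ((r:ℝ)*τ+τ)) := by
      ext z
      simp only [Set.mem_inter_iff, Set.mem_preimage, Set.mem_Ico]
      constructor
      · rintro ⟨h1, h2, h3⟩
        exact ⟨h1, by linarith, by linarith⟩
      · rintro ⟨h1, h2, h3⟩
        exact ⟨h1, by linarith, by linarith⟩
    rw [this, measure_preimage_add_right]
  -- sum of slices
  have slicesum : ∀ (T : Set ℝ), MeasurableSet T → ∀ N : ℕ,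
      ∑ r ∈ Finset.range N, volume (T ∩ Ico ((r:ℝ)*τ) ((r:ℝ)*τ+τ))
        = volume (T ∩ Ico 0 ((N:ℝ)*τ)) := by
    intro T hT N
    rw [← measure_biUnion_finset]
    · congr 1
      rw [← Set.inter_iUnion₂, unionIco hτ]
    · intro a _ b _ hab
      have : Disjoint (Ico ((a:ℝ)*τ) ((a:ℝ)*τ+τ)) (Ico ((b:ℝ)*τ) ((b:ℝ)*τ+τ)) := by
        rcases lt_or_gt_of_ne hab with h | h
        · apply Set.disjoint_left.mpr
          intro z hz1 hz2
          have : (a:ℝ) + 1 ≤ (b:ℝ) := by exact_mod_cast h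
          have := hz1.2; have := hz2.1
          nlinarith
        · apply Set.disjoint_left.mpr
          intro z hz1 hz2
          have : (b:ℝ) + 1 ≤ (a:ℝ) := by exact_mod_cast h
          have := hz1.1; have := hz2.2
          nlinarith
      exact (this.mono (Set.inter_subset_right) (Set.inter_subset_right))
    · exact fun b _ => hT.inter measurableSet_Ico
  -- X_r ⊆ S_r
  have hXrSr : ∀ r, Xr r ⊆ Sr r := by
    intro r z hz
    refine ⟨?_, hz.2⟩
    have : z + (r:ℝ)*τ ∈ X := hz.1
    have h2 : (z + (r:ℝ)*τ) + 0 ∈ S := Set.add_mem_add this h0Y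
    simpa using h2
  -- the wrapped set is inside the union of the differences
  have hVsub : {z : ℝ | z ∈ Ico 0 τ ∧ ∃ r : ℕ, r ≤ R + 1 ∧ z + (r:ℝ)*τ ∈ S}
      ⊆ ⋃ r ∈ Finset.range (R+2), (Sr r \ Xr r) := by
    rintro z ⟨hzI, r₀, hr₀, hr₀S⟩
    classical
    set T := (Finset.range (R+2)).filter (fun r : ℕ => z + (r:ℝ)*τ ∈ X) with hT
    by_cases hTe : T.Nonempty
    · set rm := T.max' hTe with hrm
      have hrmT : rm ∈ T := T.max'_mem hTe
      have hrmX : z + (rm:ℝ)*τ ∈ X := (Finset.mem_filter.mp hrmT).2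
      have hrmR : rm ≤ R := by
        have h1 := (hXsub hrmX).2
        have h2 : (0:ℝ) ≤ z := hzI.1
        by_contra hcon
        push_neg at hcon
        have hc2 : R + 1 ≤ rm := hcon
        have : ((R:ℝ)+1) ≤ (rm:ℝ) := by exact_mod_cast hc2
        nlinarith
      refine Set.mem_biUnion (x := rm + 1) (Finset.mem_range.mpr (by omega)) ?_
      refine ⟨⟨?_, hzI⟩, ?_⟩
      · show z + ((rm+1 : ℕ):ℝ)*τ ∈ S
        have : z + ((rm+1 : ℕ):ℝ)*τ = (z + (rm:ℝ)*τ) + τ := by push_cast; ring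
        rw [this]
        exact Set.add_mem_add hrmX hτY
      · intro hcon
        have hconX : z + ((rm+1 : ℕ):ℝ)*τ ∈ X := hcon.1
        have : rm + 1 ∈ T := Finset.mem_filter.mpr ⟨Finset.mem_range.mpr (by omega), hconX⟩
        have := T.le_max' _ this
        omega
    · refine Set.mem_biUnion (x := r₀) (Finset.mem_range.mpr (by omega)) ?_
      refine ⟨⟨hr₀S, hzI⟩, ?_⟩
      intro hcon
      exact hTe ⟨r₀, Finset.mem_filter.mpr ⟨Finset.mem_range.mpr (by omega), hcon.1⟩⟩
  -- assemble
  have hXsum : volume X = ∑ r ∈ Finset.range (R+2), volume (Xr r) := by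
    have h1 : ∀ r : ℕ, volume (Xr r) = volume (X ∩ Ico ((r:ℝ)*τ) ((r:ℝ)*τ+τ)) :=
      fun r => slice X hXmeas r
    rw [Finset.sum_congr rfl (fun r _ => h1 r), slicesum X hXmeas (R+2)]
    have heq : X ∩ Ico 0 (((R+2:ℕ):ℝ) * τ) = X := by
      rw [Set.inter_eq_left]
      refine subset_trans hXsub ?_
      apply Set.Ico_subset_Ico le_rfl
      have : ((R:ℝ)+1) ≤ ((R+2:ℕ):ℝ) := by push_cast; linarith
      nlinarith
    rw [heq]
  have hSsum : ∑ r ∈ Finset.range (R+2), volume (Sr r) ≤ volume S := by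
    have h1 : ∀ r : ℕ, volume (Sr r) = volume (S ∩ Ico ((r:ℝ)*τ) ((r:ℝ)*τ+τ)) :=
      fun r => slice S hSmeas r
    rw [Finset.sum_congr rfl (fun r _ => h1 r), slicesum S hSmeas (R+2)]
    exact measure_mono Set.inter_subset_left
  have hsplit : ∀ r, volume (Sr r) = volume (Xr r) + volume (Sr r \ Xr r) := by
    intro r
    rw [← measure_inter_add_diff (Sr r) (hXrm r)]
    congr 2
    rw [Set.inter_eq_right]
    exact hXrSr r
  have hV : volume {z : ℝ | z ∈ Ico 0 τ ∧ ∃ r : ℕ, r ≤ R + 1 ∧ z + (r:ℝ)*τ ∈ S}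
      ≤ ∑ r ∈ Finset.range (R+2), volume (Sr r \ Xr r) := by
    refine le_trans (measure_mono hVsub) ?_
    exact measure_biUnion_finset_le _ _
  calc volume X + volume {z : ℝ | z ∈ Ico 0 τ ∧ ∃ r : ℕ, r ≤ R + 1 ∧ z + (r:ℝ)*τ ∈ S}
      ≤ ∑ r ∈ Finset.range (R+2), volume (Xr r)
        + ∑ r ∈ Finset.range (R+2), volume (Sr r \ Xr r) := by
        rw [← hXsum]; exact add_le_add_right hV _
    _ = ∑ r ∈ Finset.range (R+2), (volume (Xr r) + volume (Sr r \ Xr r)) := by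
        rw [Finset.sum_add_distrib]
    _ = ∑ r ∈ Finset.range (R+2), volume (Sr r) := by
        refine Finset.sum_congr rfl fun r _ => (hsplit r).symm
    _ ≤ volume S := hSsum


lemma side_a {P Q : Set ℝ} (hPc : IsCompact P) (hQc : IsCompact Q)
    (hPne : P.Nonempty) (hQne : Q.Nonempty)
    {l m : ℝ} (hl0 : 0 < l) (hm0 : 0 ≤ m) (hml : m ≤ l)
    (hP : P ⊆ Icc 0 l) (h0P : (0:ℝ) ∈ P) (hlP : l ∈ P)
    (hQ : Q ⊆ Icc 0 m) :
    volume Q + min (ENNReal.ofReal l) (volume P + volume Q) ≤ volume (P + Q) := by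
  have hQl : Q ⊆ Icc 0 l := subset_trans hQ (Icc_subset_Icc le_rfl hml)
  have hcnt := counting hQc hPc hl0 h0P hlP 1 (by
    refine subset_trans hQl ?_
    intro x hx
    exact ⟨hx.1, lt_of_le_of_lt hx.2 (by norm_num; linarith)⟩)
  have hcd := cd_limit hPc hQc hPne hQne hl0 hP hQl
  have hVV : {z : ℝ | z ∈ Ico 0 l ∧ (z ∈ P + Q ∨ z + l ∈ P + Q)}
      ⊆ {z : ℝ | z ∈ Ico 0 l ∧ ∃ r : ℕ, r ≤ 1 + 1 ∧ z + (r:ℝ)*l ∈ Q + P} := by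
    rintro z ⟨hz1, hz2⟩
    refine ⟨hz1, ?_⟩
    rcases hz2 with h | h
    · exact ⟨0, by norm_num, by rw [add_comm Q P]; simpa using h⟩
    · exact ⟨1, by norm_num, by rw [add_comm Q P]; simpa using h⟩
  calc volume Q + min (ENNReal.ofReal l) (volume P + volume Q)
      ≤ volume Q + volume {z : ℝ | z ∈ Ico 0 l ∧ ∃ r : ℕ, r ≤ 1 + 1 ∧ z + (r:ℝ)*l ∈ Q + P} :=
        add_le_add_right (le_trans hcd (measure_mono hVV)) _
    _ ≤ volume (Q + P) := hcnt
    _ = volume (P + Q) := by rw [add_comm Q P]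

lemma side_b {P Q : Set ℝ} (hPc : IsCompact P) (hQc : IsCompact Q)
    (hPne : P.Nonempty) (hQne : Q.Nonempty)
    {l m : ℝ} (hm0 : 0 < m) (hml : m ≤ l)
    (hP : P ⊆ Icc 0 l) (h0P : (0:ℝ) ∈ P)
    (hQ : Q ⊆ Icc 0 m) (h0Q : (0:ℝ) ∈ Q) (hmQ : m ∈ Q) :
    volume P + min (ENNReal.ofReal m) (volume (P ∩ Icc 0 m) + volume Q)
      ≤ volume (P + Q) := by
  set R : ℕ := Nat.ceil (l/m) with hR
  have hlR : l < ((R:ℝ)+1)*m := by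
    have h1 : l/m ≤ (R:ℝ) := Nat.le_ceil _
    rw [div_le_iff₀ hm0] at h1
    nlinarith
  have hcnt := counting hPc hQc hm0 h0Q hmQ R (by
    refine subset_trans hP ?_
    intro x hx
    exact ⟨hx.1, lt_of_le_of_lt hx.2 hlR⟩)
  set P' : Set ℝ := P ∩ Icc 0 m with hP'
  have hP'c : IsCompact P' := hPc.inter_right isClosed_Icc
  have hP'ne : P'.Nonempty := ⟨0, h0P, ⟨le_rfl, hm0.le⟩⟩
  have hP'sub : P' ⊆ Icc 0 m := inter_subset_right
  have hcd := cd_limit hP'c hQc hP'ne hQne hm0 hP'sub hQ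
  have hVV : {z : ℝ | z ∈ Ico 0 m ∧ (z ∈ P' + Q ∨ z + m ∈ P' + Q)}
      ⊆ {z : ℝ | z ∈ Ico 0 m ∧ ∃ r : ℕ, r ≤ R + 1 ∧ z + (r:ℝ)*m ∈ P + Q} := by
    rintro z ⟨hz1, hz2⟩
    have hsub : P' + Q ⊆ P + Q := Set.add_subset_add_right inter_subset_left
    refine ⟨hz1, ?_⟩
    rcases hz2 with h | h
    · exact ⟨0, by omega, by simpa using hsub h⟩
    · exact ⟨1, by omega, by simpa using hsub h⟩
  calc volume P + min (ENNReal.ofReal m) (volume P' + volume Q)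
      ≤ volume P + volume {z : ℝ | z ∈ Ico 0 m ∧ ∃ r : ℕ, r ≤ R + 1 ∧ z + (r:ℝ)*m ∈ P + Q} :=
        add_le_add_right (le_trans hcd (measure_mono hVV)) _
    _ ≤ volume (P + Q) := hcnt

lemma both_normalized {P Q : Set ℝ} (hPc : IsCompact P) (hQc : IsCompact Q)
    (hPne : P.Nonempty) (hQne : Q.Nonempty)
    {l m : ℝ} (hl0 : 0 < l) (hm0 : 0 < m) (hml : m ≤ l)
    (hP : P ⊆ Icc 0 l) (h0P : (0:ℝ) ∈ P) (hlP : l ∈ P)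
    (hQ : Q ⊆ Icc 0 m) (h0Q : (0:ℝ) ∈ Q) (hmQ : m ∈ Q)
    (hyp : volume (P + Q) < volume P + 2 * volume Q) :
    ENNReal.ofReal l + volume Q ≤ volume (P + Q) ∧
    ENNReal.ofReal m + volume P ≤ volume (P + Q) := by
  have hPm : MeasurableSet P := hPc.isClosed.measurableSet
  have hQfin : volume Q ≠ ⊤ := by
    refine ne_top_of_le_ne_top ?_ (measure_mono hQ)
    rw [Real.volume_Icc]
    exact ENNReal.ofReal_ne_top
  have hPfin : volume P ≠ ⊤ := by
    refine ne_top_of_le_ne_top ?_ (measure_mono hP)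
    rw [Real.volume_Icc]
    exact ENNReal.ofReal_ne_top
  have ha : ENNReal.ofReal l + volume Q ≤ volume (P + Q) := by
    have h := side_a hPc hQc hPne hQne hl0 hm0.le hml hP h0P hlP hQ
    rcases le_total (ENNReal.ofReal l) (volume P + volume Q) with hc | hc
    · rw [min_eq_left hc] at h
      calc ENNReal.ofReal l + volume Q = volume Q + ENNReal.ofReal l := by ring
        _ ≤ volume (P + Q) := h
    · rw [min_eq_right hc] at h
      exfalso
      have : volume P + 2 * volume Q ≤ volume (P + Q) := by
        calc volume P + 2 * volume Q = volume Q + (volume P + volume Q) := by ring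
          _ ≤ volume (P + Q) := h
      exact absurd hyp (not_lt.mpr this)
  refine ⟨ha, ?_⟩
  -- derive density:  vol (Icc 0 l \ P) < vol Q
  have hlsplit : ENNReal.ofReal l = volume P + volume (Icc 0 l \ P) := by
    have := measure_inter_add_diff (μ := volume) (Icc (0:ℝ) l) hPm
    rw [Set.inter_eq_right.mpr hP] at this
    rw [this, Real.volume_Icc, sub_zero]
  have hlt : ENNReal.ofReal l < volume P + volume Q := by
    have h2 : ENNReal.ofReal l + volume Q < volume P + volume Q + volume Q := by
      calc ENNReal.ofReal l + volume Q ≤ volume (P + Q) := ha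
        _ < volume P + 2 * volume Q := hyp
        _ = volume P + volume Q + volume Q := by ring
    exact (ENNReal.add_lt_add_iff_right hQfin).mp h2
  have hdiff : volume (Icc 0 l \ P) < volume Q := by
    rw [hlsplit] at hlt
    exact (ENNReal.add_lt_add_iff_left hPfin).mp hlt
  have hmsplit : ENNReal.ofReal m = volume (P ∩ Icc 0 m) + volume (Icc 0 m \ P) := by
    have := measure_inter_add_diff (μ := volume) (Icc (0:ℝ) m) hPm
    rw [Set.inter_comm] at this
    rw [this, Real.volume_Icc, sub_zero]
  have hmono : volume (Icc 0 m \ P) ≤ volume (Icc 0 l \ P) :=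
    measure_mono (Set.diff_subset_diff_left (Icc_subset_Icc le_rfl hml))
  have hmle : ENNReal.ofReal m ≤ volume (P ∩ Icc 0 m) + volume Q := by
    rw [hmsplit]
    exact add_le_add_right (le_trans hmono hdiff.le) _
  have h := side_b hPc hQc hPne hQne hm0 hml hP h0P hQ h0Q hmQ
  rw [min_eq_left hmle] at h
  calc ENNReal.ofReal m + volume P = volume P + ENNReal.ofReal m := by ring
    _ ≤ volume (P + Q) := h


/-- translate a set to start at 0 -/
lemma translate_facts (K : Set ℝ) (hKc : IsCompact K) (hKne : K.Nonempty) :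
    let P := (fun x => x - sInf K) '' K
    IsCompact P ∧ P ⊆ Icc 0 (sSup K - sInf K) ∧ (0:ℝ) ∈ P ∧ (sSup K - sInf K) ∈ P ∧
      volume P = volume K := by
  intro P
  have hbdd : BddBelow K := hKc.bddBelow
  have hbdd2 : BddAbove K := hKc.bddAbove
  have hPpre : P = (fun x => x + sInf K) ⁻¹' K := by
    ext x
    constructor
    · rintro ⟨k, hk, rfl⟩
      simpa using hk
    · intro hx
      exact ⟨x + sInf K, hx, by ring⟩
  refine ⟨hKc.image (continuous_id.sub continuous_const), ?_, ?_, ?_, ?_⟩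
  · rintro x ⟨k, hk, rfl⟩
    exact ⟨by simp [sub_nonneg]; exact csInf_le hbdd hk,
      by simp only []; have := le_csSup hbdd2 hk; linarith⟩
  · exact ⟨sInf K, hKc.sInf_mem hKne, by ring⟩
  · exact ⟨sSup K, hKc.sSup_mem hKne, by ring⟩
  · rw [hPpre, measure_preimage_add_right]

lemma sum_translate (K L : Set ℝ) (a b : ℝ) :
    ((fun x => x - a) '' K) + ((fun x => x - b) '' L) = (fun x => x - (a+b)) '' (K + L) := by
  ext x
  constructor
  · rintro ⟨p, ⟨k, hk, rfl⟩, q, ⟨l', hl', rfl⟩, rfl⟩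
    exact ⟨k + l', Set.add_mem_add hk hl', by ring⟩
  · rintro ⟨s, ⟨k, hk, l', hl', rfl⟩, rfl⟩
    exact ⟨k - a, ⟨k, hk, rfl⟩, l' - b, ⟨l', hl', rfl⟩, by ring⟩

lemma vol_image_sub (S : Set ℝ) (a : ℝ) : volume ((fun x => x - a) '' S) = volume S := by
  have : (fun x => x - a) '' S = (fun x => x + a) ⁻¹' S := by
    ext x
    constructor
    · rintro ⟨s, hs, rfl⟩; simpa using hs
    · intro hx; exact ⟨x + a, hx, by ring⟩
  rw [this, measure_preimage_add_right]

lemma compact_pair {K L : Set ℝ} (hKc : IsCompact K) (hLc : IsCompact L)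
    (hKne : K.Nonempty) (hLne : L.Nonempty)
    (h1 : volume (K + L) < volume K + 2 * volume L)
    (h2 : volume (K + L) < volume L + 2 * volume K) :
    ENNReal.ofReal (sSup K - sInf K) + volume L ≤ volume (K + L) ∧
    ENNReal.ofReal (sSup L - sInf L) + volume K ≤ volume (K + L) := by
  -- positivity of measures
  have hKvol : volume K ≤ volume (K + L) := by
    obtain ⟨y, hy⟩ := hLne
    have : (fun x => x - y) '' (K + L) ⊇ K := by
      rintro k hk
      exact ⟨k + y, Set.add_mem_add hk hy, by ring⟩
    calc volume K ≤ volume ((fun x => x - y) '' (K + L)) := measure_mono this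
      _ = volume (K + L) := vol_image_sub _ _
  have hLvol : volume L ≤ volume (K + L) := by
    obtain ⟨y, hy⟩ := hKne
    have : (fun x => x - y) '' (K + L) ⊇ L := by
      rintro k hk
      have : y + k ∈ K + L := Set.add_mem_add hy hk
      exact ⟨y + k, this, by ring⟩
    calc volume L ≤ volume ((fun x => x - y) '' (K + L)) := measure_mono this
      _ = volume (K + L) := vol_image_sub _ _
  have hK0 : 0 < volume K := by
    by_contra hcon
    push_neg at hcon
    have : volume K = 0 := le_antisymm hcon zero_le
    rw [this] at h2
    simp at h2
    exact absurd h2 (not_lt.mpr hLvol)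
  have hL0 : 0 < volume L := by
    by_contra hcon
    push_neg at hcon
    have : volume L = 0 := le_antisymm hcon zero_le
    rw [this] at h1
    simp at h1
    exact absurd h1 (not_lt.mpr hKvol)
  -- hull positivity
  have hKIcc : K ⊆ Icc (sInf K) (sSup K) := fun x hx =>
    ⟨csInf_le hKc.bddBelow hx, le_csSup hKc.bddAbove hx⟩
  have hLIcc : L ⊆ Icc (sInf L) (sSup L) := fun x hx =>
    ⟨csInf_le hLc.bddBelow hx, le_csSup hLc.bddAbove hx⟩
  have hKl0 : 0 < sSup K - sInf K := by
    by_contra hcon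
    push_neg at hcon
    have : volume K ≤ ENNReal.ofReal (sSup K - sInf K) := by
      calc volume K ≤ volume (Icc (sInf K) (sSup K)) := measure_mono hKIcc
        _ = ENNReal.ofReal (sSup K - sInf K) := Real.volume_Icc
    rw [ENNReal.ofReal_eq_zero.mpr hcon] at this
    exact absurd (le_antisymm this zero_le) hK0.ne'
  have hLl0 : 0 < sSup L - sInf L := by
    by_contra hcon
    push_neg at hcon
    have : volume L ≤ ENNReal.ofReal (sSup L - sInf L) := by
      calc volume L ≤ volume (Icc (sInf L) (sSup L)) := measure_mono hLIcc
        _ = ENNReal.ofReal (sSup L - sInf L) := Real.volume_Icc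
    rw [ENNReal.ofReal_eq_zero.mpr hcon] at this
    exact absurd (le_antisymm this zero_le) hL0.ne'
  -- normalize
  obtain ⟨hPc, hPsub, h0P, hlP, hPvol⟩ := translate_facts K hKc hKne
  obtain ⟨hQc, hQsub, h0Q, hmQ, hQvol⟩ := translate_facts L hLc hLne
  set P := (fun x => x - sInf K) '' K with hPdef
  set Q := (fun x => x - sInf L) '' L with hQdef
  have hPQvol : volume (P + Q) = volume (K + L) := by
    rw [hPdef, hQdef, sum_translate, vol_image_sub]
  have hPne : P.Nonempty := ⟨0, h0P⟩
  have hQne : Q.Nonempty := ⟨0, h0Q⟩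
  rcases le_total (sSup L - sInf L) (sSup K - sInf K) with hml | hml
  · have := both_normalized hPc hQc hPne hQne hKl0 hLl0 hml hPsub h0P hlP hQsub h0Q hmQ
      (by rw [hPQvol, hPvol, hQvol]; exact h1)
    rw [hPQvol, hPvol, hQvol] at this
    exact this
  · have := both_normalized hQc hPc hQne hPne hLl0 hKl0 hml hQsub h0Q hmQ hPsub h0P hlP
      (by rw [add_comm Q P, hPQvol, hPvol, hQvol]; exact h2)
    rw [add_comm Q P, hPQvol, hPvol, hQvol] at this
    exact ⟨this.2, this.1⟩

end Stmt0Proof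

open Stmt0Proof

theorem stmt0 (A B : Set ℝ) (δ : ℝ) (hA : MeasurableSet A) (hB : MeasurableSet B)
    (hAne : A.Nonempty) (hBne : B.Nonempty)
    (hA0 : 0 < volume A) (hAfin : volume A < ⊤)
    (hB0 : 0 < volume B) (hBfin : volume B < ⊤)
    (hδ0 : 0 < δ)
    (hδsmall : ENNReal.ofReal δ < min (volume A) (volume B))
    (hsum : volume (A + B) < volume A + volume B + ENNReal.ofReal δ) :
    ∃ I J : Set ℝ, I.OrdConnected ∧ J.OrdConnected ∧ A ⊆ I ∧ B ⊆ J ∧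
      volume I < volume A + ENNReal.ofReal δ ∧
      volume J < volume B + ENNReal.ofReal δ := by
  classical
  set σ := volume (A + B) with hσdef
  have hσfin : σ ≠ ⊤ := by
    have h1 : volume A + volume B + ENNReal.ofReal δ < ⊤ := by
      apply ENNReal.add_lt_top.mpr
      exact ⟨ENNReal.add_lt_top.mpr ⟨hAfin, hBfin⟩, ENNReal.ofReal_lt_top⟩
    exact ne_top_of_lt (lt_trans hsum h1)
  set aR := (volume A).toReal with haRdef
  set bR := (volume B).toReal with hbRdef
  set sR := σ.toReal with hsRdef
  have hαofReal : ENNReal.ofReal aR = volume A := ENNReal.ofReal_toReal hAfin.ne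
  have hβofReal : ENNReal.ofReal bR = volume B := ENNReal.ofReal_toReal hBfin.ne
  have haR0 : 0 < aR := ENNReal.toReal_pos hA0.ne' hAfin.ne
  have hbR0 : 0 < bR := ENNReal.toReal_pos hB0.ne' hBfin.ne
  have hsR0 : 0 ≤ sR := ENNReal.toReal_nonneg
  have hδa : δ < aR := by
    have h1 : ENNReal.ofReal δ < volume A := lt_of_lt_of_le hδsmall (min_le_left _ _)
    have := ENNReal.toReal_lt_toReal (ENNReal.ofReal_ne_top) hAfin.ne |>.mpr h1
    rwa [ENNReal.toReal_ofReal hδ0.le] at this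
  have hδb : δ < bR := by
    have h1 : ENNReal.ofReal δ < volume B := lt_of_lt_of_le hδsmall (min_le_right _ _)
    have := ENNReal.toReal_lt_toReal (ENNReal.ofReal_ne_top) hBfin.ne |>.mpr h1
    rwa [ENNReal.toReal_ofReal hδ0.le] at this
  have hsRlt : sR < aR + bR + δ := by
    have hfin : volume A + volume B + ENNReal.ofReal δ ≠ ⊤ := by
      apply ENNReal.add_ne_top.mpr
      exact ⟨ENNReal.add_ne_top.mpr ⟨hAfin.ne, hBfin.ne⟩, ENNReal.ofReal_ne_top⟩
    have := (ENNReal.toReal_lt_toReal hσfin hfin).mpr hsum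
    rwa [ENNReal.toReal_add (ENNReal.add_ne_top.mpr ⟨hAfin.ne, hBfin.ne⟩) ENNReal.ofReal_ne_top,
      ENNReal.toReal_add hAfin.ne hBfin.ne, ENNReal.toReal_ofReal hδ0.le] at this
  have hm1 : 0 < aR + 2*bR - sR := by linarith
  have hm2 : 0 < bR + 2*aR - sR := by linarith
  -- the key approximation step
  have key : ∀ ε : ℝ, 0 < ε →
      ε ≤ min (min (aR/2) (bR/2)) (min ((aR + 2*bR - sR)/4) ((bR + 2*aR - sR)/4)) →
      (∀ a₁ ∈ A, ∀ a₂ ∈ A, a₂ - a₁ ≤ sR - bR + 2*ε) ∧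
      (∀ b₁ ∈ B, ∀ b₂ ∈ B, b₂ - b₁ ≤ sR - aR + 2*ε) := by
    intro ε hε0 hεb
    have hεa2 : ε ≤ aR/2 := le_trans hεb (le_trans (min_le_left _ _) (min_le_left _ _))
    have hεb2 : ε ≤ bR/2 := le_trans hεb (le_trans (min_le_left _ _) (min_le_right _ _))
    have hεm1 : ε ≤ (aR + 2*bR - sR)/4 :=
      le_trans hεb (le_trans (min_le_right _ _) (min_le_left _ _))
    have hεm2 : ε ≤ (bR + 2*aR - sR)/4 :=
      le_trans hεb (le_trans (min_le_right _ _) (min_le_right _ _))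
    obtain ⟨KA, hKAsub, hKAc, hKAvol⟩ := hA.exists_isCompact_lt_add hAfin.ne
      (ε := ENNReal.ofReal ε) (by simp [ENNReal.ofReal_eq_zero]; linarith)
    obtain ⟨KB, hKBsub, hKBc, hKBvol⟩ := hB.exists_isCompact_lt_add hBfin.ne
      (ε := ENNReal.ofReal ε) (by simp [ENNReal.ofReal_eq_zero]; linarith)
    -- real bounds on compact measures
    have hKAfin : volume KA ≠ ⊤ := ne_top_of_le_ne_top hAfin.ne (measure_mono hKAsub)
    have hKBfin : volume KB ≠ ⊤ := ne_top_of_le_ne_top hBfin.ne (measure_mono hKBsub)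
    set kaR := (volume KA).toReal with hkaRdef
    set kbR := (volume KB).toReal with hkbRdef
    have hkaR : aR < kaR + ε := by
      have hfin : volume KA + ENNReal.ofReal ε ≠ ⊤ :=
        ENNReal.add_ne_top.mpr ⟨hKAfin, ENNReal.ofReal_ne_top⟩
      have := (ENNReal.toReal_lt_toReal hAfin.ne hfin).mpr hKAvol
      rwa [ENNReal.toReal_add hKAfin ENNReal.ofReal_ne_top,
        ENNReal.toReal_ofReal hε0.le] at this
    have hkbR : bR < kbR + ε := by
      have hfin : volume KB + ENNReal.ofReal ε ≠ ⊤ :=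
        ENNReal.add_ne_top.mpr ⟨hKBfin, ENNReal.ofReal_ne_top⟩
      have := (ENNReal.toReal_lt_toReal hBfin.ne hfin).mpr hKBvol
      rwa [ENNReal.toReal_add hKBfin ENNReal.ofReal_ne_top,
        ENNReal.toReal_ofReal hε0.le] at this
    have hkaRle : kaR ≤ aR := by
      rw [hkaRdef, haRdef]
      exact ENNReal.toReal_mono hAfin.ne (measure_mono hKAsub)
    have hkbRle : kbR ≤ bR := by
      rw [hkbRdef, hbRdef]
      exact ENNReal.toReal_mono hBfin.ne (measure_mono hKBsub)
    have hKAne : KA.Nonempty := by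
      rw [Set.nonempty_iff_ne_empty]
      intro hcon
      have h0 : volume KA = 0 := by rw [hcon]; exact measure_empty
      have hz : kaR = 0 := by rw [hkaRdef, h0]; simp
      rw [hz] at hkaR
      linarith
    have hKBne : KB.Nonempty := by
      rw [Set.nonempty_iff_ne_empty]
      intro hcon
      have h0 : volume KB = 0 := by rw [hcon]; exact measure_empty
      have hz : kbR = 0 := by rw [hkbRdef, h0]; simp
      rw [hz] at hkbR
      linarith
    -- the generic bound for enlarged compacts
    have main : ∀ K' L' : Set ℝ, IsCompact K' → IsCompact L' → K'.Nonempty → L'.Nonempty →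
        K' ⊆ A → L' ⊆ B → KA ⊆ K' → KB ⊆ L' →
        ENNReal.ofReal (sSup K' - sInf K') + volume L' ≤ σ ∧
        ENNReal.ofReal (sSup L' - sInf L') + volume K' ≤ σ := by
      intro K' L' hK'c hL'c hK'ne hL'ne hK'A hL'B hKAK' hKBL'
      have hsub : K' + L' ⊆ A + B := Set.add_subset_add hK'A hL'B
      have hσ' : volume (K' + L') ≤ σ := by rw [hσdef]; exact measure_mono hsub
      have hK'fin : volume K' ≠ ⊤ := ne_top_of_le_ne_top hAfin.ne (measure_mono hK'A)
      have hL'fin : volume L' ≠ ⊤ := ne_top_of_le_ne_top hBfin.ne (measure_mono hL'B)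
      have hk' : kaR ≤ (volume K').toReal := ENNReal.toReal_mono hK'fin (measure_mono hKAK')
      have hl' : kbR ≤ (volume L').toReal := ENNReal.toReal_mono hL'fin (measure_mono hKBL')
      have hk'le : (volume K').toReal ≤ aR := ENNReal.toReal_mono hAfin.ne (measure_mono hK'A)
      have hl'le : (volume L').toReal ≤ bR := ENNReal.toReal_mono hBfin.ne (measure_mono hL'B)
      have i1 : σ < volume K' + 2 * volume L' := by
        have hfin : volume K' + 2 * volume L' ≠ ⊤ := by
          apply ENNReal.add_ne_top.mpr
          refine ⟨hK'fin, ?_⟩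
          exact ENNReal.mul_ne_top (by norm_num) hL'fin
        rw [← ENNReal.toReal_lt_toReal hσfin hfin]
        have heq : (volume K' + 2*volume L').toReal
            = (volume K').toReal + 2*(volume L').toReal := by
          rw [ENNReal.toReal_add hK'fin (ENNReal.mul_ne_top (by norm_num) hL'fin),
            ENNReal.toReal_mul]
          norm_num
        rw [heq]
        linarith
      have i2 : σ < volume L' + 2 * volume K' := by
        have hfin : volume L' + 2 * volume K' ≠ ⊤ := by
          apply ENNReal.add_ne_top.mpr
          refine ⟨hL'fin, ?_⟩
          exact ENNReal.mul_ne_top (by norm_num) hK'fin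
        rw [← ENNReal.toReal_lt_toReal hσfin hfin]
        have heq : (volume L' + 2*volume K').toReal
            = (volume L').toReal + 2*(volume K').toReal := by
          rw [ENNReal.toReal_add hL'fin (ENNReal.mul_ne_top (by norm_num) hK'fin),
            ENNReal.toReal_mul]
          norm_num
        rw [heq]
        linarith
      have hcp := compact_pair hK'c hL'c hK'ne hL'ne (lt_of_le_of_lt hσ' i1)
        (lt_of_le_of_lt hσ' i2)
      exact ⟨le_trans hcp.1 hσ', le_trans hcp.2 hσ'⟩
    constructor
    · intro a₁ ha₁ a₂ ha₂
      set K' := insert a₁ (insert a₂ KA) with hK'def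
      have hK'c : IsCompact K' := (hKAc.insert a₂).insert a₁
      have ha₁K : a₁ ∈ K' := Set.mem_insert _ _
      have ha₂K : a₂ ∈ K' := Set.mem_insert_of_mem _ (Set.mem_insert _ _)
      have hK'A : K' ⊆ A := by
        rw [hK'def]
        exact Set.insert_subset ha₁ (Set.insert_subset ha₂ hKAsub)
      have hKAK' : KA ⊆ K' :=
        subset_trans (Set.subset_insert _ _) (Set.subset_insert _ _)
      have hm := (main K' KB hK'c hKBc ⟨a₁, ha₁K⟩ hKBne hK'A hKBsub hKAK'
        (subset_refl _)).1
      have hbdd1 : sInf K' ≤ a₁ := csInf_le hK'c.bddBelow ha₁K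
      have hbdd2 : a₂ ≤ sSup K' := le_csSup hK'c.bddAbove ha₂K
      have hh0 : 0 ≤ sSup K' - sInf K' := by
        have h1 : sInf K' ≤ a₂ := csInf_le hK'c.bddBelow ha₂K
        have h2 : a₂ ≤ sSup K' := hbdd2
        linarith
      have hmr := ENNReal.toReal_mono hσfin hm
      rw [ENNReal.toReal_add ENNReal.ofReal_ne_top hKBfin,
        ENNReal.toReal_ofReal hh0] at hmr
      have : a₂ - a₁ ≤ sSup K' - sInf K' := by linarith
      have hfinal : sSup K' - sInf K' + kbR ≤ sR := hmr
      linarith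
    · intro b₁ hb₁ b₂ hb₂
      set L' := insert b₁ (insert b₂ KB) with hL'def
      have hL'c : IsCompact L' := (hKBc.insert b₂).insert b₁
      have hb₁K : b₁ ∈ L' := Set.mem_insert _ _
      have hb₂K : b₂ ∈ L' := Set.mem_insert_of_mem _ (Set.mem_insert _ _)
      have hL'B : L' ⊆ B := by
        rw [hL'def]
        exact Set.insert_subset hb₁ (Set.insert_subset hb₂ hKBsub)
      have hKBL' : KB ⊆ L' :=
        subset_trans (Set.subset_insert _ _) (Set.subset_insert _ _)
      have hm := (main KA L' hKAc hL'c hKAne ⟨b₁, hb₁K⟩ hKAsub hL'B (subset_refl _)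
        hKBL').2
      have hbdd1 : sInf L' ≤ b₁ := csInf_le hL'c.bddBelow hb₁K
      have hbdd2 : b₂ ≤ sSup L' := le_csSup hL'c.bddAbove hb₂K
      have hh0 : 0 ≤ sSup L' - sInf L' := by
        have h1 : sInf L' ≤ b₂ := csInf_le hL'c.bddBelow hb₂K
        linarith
      have hmr := ENNReal.toReal_mono hσfin hm
      rw [ENNReal.toReal_add ENNReal.ofReal_ne_top hKAfin,
        ENNReal.toReal_ofReal hh0] at hmr
      have : b₂ - b₁ ≤ sSup L' - sInf L' := by linarith
      have hfinal : sSup L' - sInf L' + kaR ≤ sR := hmr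
      linarith
  -- remove the ε
  set εb := min (min (aR/2) (bR/2)) (min ((aR + 2*bR - sR)/4) ((bR + 2*aR - sR)/4)) with hεbdef
  have hεb0 : 0 < εb := by
    apply lt_min (lt_min (by linarith) (by linarith)) (lt_min (by linarith) (by linarith))
  have pairA : ∀ a₁ ∈ A, ∀ a₂ ∈ A, a₂ - a₁ ≤ sR - bR := by
    intro a₁ h₁ a₂ h₂
    apply le_of_forall_pos_le_add
    intro ε' hε'
    have hε0 : 0 < min (ε'/2) εb := lt_min (by linarith) hεb0
    have h := (key (min (ε'/2) εb) hε0 (min_le_right _ _)).1 a₁ h₁ a₂ h₂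
    have h2 : 2 * min (ε'/2) εb ≤ ε' := by
      have := min_le_left (ε'/2) εb
      linarith
    linarith
  have pairB : ∀ b₁ ∈ B, ∀ b₂ ∈ B, b₂ - b₁ ≤ sR - aR := by
    intro b₁ h₁ b₂ h₂
    apply le_of_forall_pos_le_add
    intro ε' hε'
    have hε0 : 0 < min (ε'/2) εb := lt_min (by linarith) hεb0
    have h := (key (min (ε'/2) εb) hε0 (min_le_right _ _)).2 b₁ h₁ b₂ h₂
    have h2 : 2 * min (ε'/2) εb ≤ ε' := by
      have := min_le_left (ε'/2) εb
      linarith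
    linarith
  obtain ⟨a₀, ha₀⟩ := hAne
  obtain ⟨b₀, hb₀⟩ := hBne
  have hAbddAbove : BddAbove A :=
    ⟨a₀ + (sR - bR), fun a ha => by have := pairA a₀ ha₀ a ha; linarith⟩
  have hAbddBelow : BddBelow A :=
    ⟨a₀ - (sR - bR), fun a ha => by have := pairA a ha a₀ ha₀; linarith⟩
  have hBbddAbove : BddAbove B :=
    ⟨b₀ + (sR - aR), fun b hb => by have := pairB b₀ hb₀ b hb; linarith⟩
  have hBbddBelow : BddBelow B :=
    ⟨b₀ - (sR - aR), fun b hb => by have := pairB b hb b₀ hb₀; linarith⟩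
  have hAne' : A.Nonempty := ⟨a₀, ha₀⟩
  have hBne' : B.Nonempty := ⟨b₀, hb₀⟩
  have hullA : sSup A - sInf A ≤ sR - bR := by
    have h1 : sSup A ≤ sInf A + (sR - bR) := by
      apply csSup_le hAne'
      intro a ha
      have h2 : a - (sR - bR) ≤ sInf A := by
        apply le_csInf hAne'
        intro a' ha'
        have := pairA a' ha' a ha
        linarith
      linarith
    linarith
  have hullB : sSup B - sInf B ≤ sR - aR := by
    have h1 : sSup B ≤ sInf B + (sR - aR) := by
      apply csSup_le hBne'
      intro b hb
      have h2 : b - (sR - aR) ≤ sInf B := by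
        apply le_csInf hBne'
        intro b' hb'
        have := pairB b' hb' b hb
        linarith
      linarith
    linarith
  refine ⟨Icc (sInf A) (sSup A), Icc (sInf B) (sSup B), Set.ordConnected_Icc,
    Set.ordConnected_Icc, ?_, ?_, ?_, ?_⟩
  · intro a ha
    exact ⟨csInf_le hAbddBelow ha, le_csSup hAbddAbove ha⟩
  · intro b hb
    exact ⟨csInf_le hBbddBelow hb, le_csSup hBbddAbove hb⟩
  · rw [Real.volume_Icc]
    have hlt : sSup A - sInf A < aR + δ := lt_of_le_of_lt hullA (by linarith)
    calc ENNReal.ofReal (sSup A - sInf A) < ENNReal.ofReal (aR + δ) :=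
        (ENNReal.ofReal_lt_ofReal_iff (by positivity)).mpr hlt
      _ = volume A + ENNReal.ofReal δ := by
        rw [ENNReal.ofReal_add haR0.le hδ0.le, hαofReal]
  · rw [Real.volume_Icc]
    have hlt : sSup B - sInf B < bR + δ := lt_of_le_of_lt hullB (by linarith)
    calc ENNReal.ofReal (sSup B - sInf B) < ENNReal.ofReal (bR + δ) :=
        (ENNReal.ofReal_lt_ofReal_iff (by positivity)).mpr hlt
      _ = volume B + ENNReal.ofReal δ := by
        rw [ENNReal.ofReal_add hbR0.le hδ0.le, hβofReal]
end

section
/- Let A, B ⊆ ℝ be compact sets with finite Lebesgue measure, and let I be an interval containing sup B. If |A+B| ≤ |A| + |B| + δ, then |A + (B \ I)| ≤ |A| + |B \ I| + δ. -/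
open MeasureTheory Set
open scoped Pointwise ENNReal

theorem stmt1 (A B : Set ℝ) (I : Set ℝ) (δ : ℝ)
    (hA : IsCompact A) (hB : IsCompact B)
    (hI : I.OrdConnected) (hsupB : sSup B ∈ I)
    (hsum : volume (A + B) ≤ volume A + volume B + ENNReal.ofReal δ) :
    volume (A + (B \ I)) ≤ volume A + volume (B \ I) + ENNReal.ofReal δ := by
  rcases A.eq_empty_or_nonempty with rfl | hAne
  · simp [Set.empty_add]
  rcases (B \ I).eq_empty_or_nonempty with hBI | hBIne
  · simp [hBI, Set.add_empty]
  have hBne : B.Nonempty := hBIne.mono diff_subset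
  set a := sSup A with ha
  set s := sSup (B \ I) with hs
  have hbdB : BddAbove B := hB.bddAbove
  have hbdBI : BddAbove (B \ I) := hbdB.mono diff_subset
  have haA : a ∈ A := hA.sSup_mem hAne
  have key : ∀ x ∈ B \ I, ∀ z ∈ B ∩ I, x < z := by
    rintro x ⟨hxB, hxI⟩ z ⟨hzB, hzI⟩
    by_contra h
    push_neg at h
    exact hxI (hI.out hzI hsupB ⟨h, le_csSup hbdB hxB⟩)
  have hsz : ∀ z ∈ B ∩ I, s ≤ z := fun z hz =>
    csSup_le hBIne (fun x hx => (key x hx z hz).le)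
  set T : Set ℝ := ((a + ·) '' (B ∩ I)) \ {a + s} with hT
  have hS1 : A + (B \ I) ⊆ Iic (a + s) := by
    rintro p ⟨u, hu, v, hv, rfl⟩
    exact add_le_add (le_csSup hA.bddAbove hu) (le_csSup hbdBI hv)
  have hTsub : T ⊆ Ioi (a + s) := by
    rintro p ⟨⟨z, hz, rfl⟩, hp⟩
    have := hsz z hz
    have : a + s ≤ a + z := by linarith
    exact lt_of_le_of_ne this (fun h => hp (by simp [← h]))
  have hdisj : Disjoint (A + (B \ I)) T := by
    refine Set.disjoint_left.mpr fun p hp hpT => ?_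
    exact absurd (mem_Iic.mp (hS1 hp)) (not_le.mpr (mem_Ioi.mp (hTsub hpT)))
  have hsub : (A + (B \ I)) ∪ T ⊆ A + B := by
    rintro p (hp | ⟨⟨z, hz, rfl⟩, -⟩)
    · exact Set.add_subset_add_left diff_subset hp
    · exact ⟨a, haA, z, hz.1, rfl⟩
  have hBImeas : MeasurableSet (B ∩ I) := hB.measurableSet.inter hI.measurableSet
  have himg : (a + ·) '' (B ∩ I) = (fun x => -a + x) ⁻¹' (B ∩ I) := by
    ext x
    constructor
    · rintro ⟨z, hz, rfl⟩; simpa using hz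
    · intro hx; exact ⟨-a + x, hx, by ring⟩
  have hTmeas : MeasurableSet T :=
    ((himg ▸ hBImeas.preimage (measurable_const_add (-a))).diff (measurableSet_singleton _))
  have hvolT : volume T = volume (B ∩ I) := by
    rw [hT, measure_diff_null (measure_singleton _)]
    have : (a + ·) '' (B ∩ I) = a +ᵥ (B ∩ I) := by
      rw [← Set.image_vadd]; rfl
    rw [this, measure_vadd]
  have hkey : volume (A + (B \ I)) + volume (B ∩ I) ≤ volume (A + B) := by
    calc volume (A + (B \ I)) + volume (B ∩ I)
        = volume (A + (B \ I)) + volume T := by rw [hvolT]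
      _ = volume ((A + (B \ I)) ∪ T) := (measure_union hdisj hTmeas).symm
      _ ≤ volume (A + B) := measure_mono hsub
  have hsplit : volume (B \ I) + volume (B ∩ I) = volume B :=
    measure_diff_add_inter B hI.measurableSet
  have hfin : volume (B ∩ I) ≠ ⊤ :=
    ((measure_mono inter_subset_left).trans_lt hB.measure_lt_top).ne
  have : volume (A + (B \ I)) + volume (B ∩ I) ≤
      (volume A + volume (B \ I) + ENNReal.ofReal δ) + volume (B ∩ I) := by
    calc volume (A + (B \ I)) + volume (B ∩ I) ≤ volume (A + B) := hkey
      _ ≤ volume A + volume B + ENNReal.ofReal δ := hsum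
      _ = (volume A + volume (B \ I) + ENNReal.ofReal δ) + volume (B ∩ I) := by
          rw [← hsplit]; ring
  exact (ENNReal.add_le_add_iff_right hfin).mp this
end

section
/- Let A, B ⊆ ℝ^d = ℝ × ℝ^{d-1} be compact sets and t ∈ (0,1). For x ∈ ℝ let A_x = {y ∈ ℝ^{d-1} : (x,y) ∈ A} and similarly B_x, S_x where S = tA + (1-t)B. Then for any λ > 0 and γ, γ̃ > 0 with γ^t γ̃^{1-t} = 1, if the sets {x : |A_x| > γλ} and {x : |B_x| > γ̃λ} are both nonempty, then {x : |S_x| > λ} ⊇ t{x : |A_x| > γλ} + (1-t){x : |B_x| > γ̃λ}. -/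
open MeasureTheory Set
open scoped Pointwise ENNReal

lemma vol_image_add_right (c : ℝ) (K : Set ℝ) : volume ((fun x => x + c) '' K) = volume K := by
  rw [show (fun x => x + c) '' K = (fun x => x + (-c)) ⁻¹' K by
    ext x; simp [sub_eq_add_neg, ← sub_eq_iff_eq_add, eq_comm]]
  exact measure_preimage_add_right volume (-c) K

lemma vol_image_add_left (c : ℝ) (K : Set ℝ) : volume ((fun x => c + x) '' K) = volume K := by
  simp only [add_comm c]; exact vol_image_add_right c K

lemma oneDim_compact (K L : Set ℝ) (hK : IsCompact K) (hL : IsCompact L)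
    (hKne : K.Nonempty) (hLne : L.Nonempty) :
    volume K + volume L ≤ volume (K + L) := by
  set k := sSup K with hk
  set l := sInf L with hl
  have hkK : k ∈ K := hK.sSup_mem hKne
  have hlL : l ∈ L := hL.sInf_mem hLne
  have key := measure_inter_add_diff (μ := volume) (K + L) (measurableSet_Iic (a := k + l))
  have hsub1 : (fun x => x + l) '' K ⊆ (K + L) ∩ Iic (k + l) := by
    rintro _ ⟨a, ha, rfl⟩
    exact ⟨add_mem_add ha hlL, by simpa using le_csSup hK.bddAbove ha⟩
  have hsub2 : (fun x => k + x) '' L \ {k + l} ⊆ (K + L) \ Iic (k + l) := by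
    rintro x ⟨⟨b, hb, rfl⟩, hx2⟩
    refine ⟨add_mem_add hkK hb, ?_⟩
    simp only [mem_Iic, not_le]
    have hbl : l ≤ b := csInf_le hL.bddBelow hb
    have hne : b ≠ l := fun h => hx2 (by simp [h])
    have : l < b := lt_of_le_of_ne hbl (Ne.symm hne)
    linarith
  calc volume K + volume L
      = volume ((fun x => x + l) '' K) + volume ((fun x => k + x) '' L \ {k + l}) := by
        rw [vol_image_add_right, measure_diff_null (measure_singleton _), vol_image_add_left]
    _ ≤ volume ((K + L) ∩ Iic (k + l)) + volume ((K + L) \ Iic (k + l)) :=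
        add_le_add (measure_mono hsub1) (measure_mono hsub2)
    _ = volume (K + L) := key

lemma oneDim_meas (U V : Set ℝ) (hU : MeasurableSet U) (hV : MeasurableSet V)
    (hUne : U.Nonempty) (hVne : V.Nonempty) :
    volume U + volume V ≤ volume (U + V) := by
  have hmono : ∀ (W Z : Set ℝ), W.Nonempty → ∀ K ⊆ Z, volume K ≤ volume (W + Z) := by
    intro W Z ⟨w, hw⟩ K hKZ
    have himg : (fun x => w + x) '' K ⊆ W + Z := by
      rintro _ ⟨a, ha, rfl⟩; exact add_mem_add hw (hKZ ha)
    calc volume K = volume ((fun x => w + x) '' K) := (vol_image_add_left w K).symm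
      _ ≤ volume (W + Z) := measure_mono himg
  refine le_of_forall_lt fun r hr => ?_
  rcases eq_or_ne (volume U) 0 with h0 | hU0
  · rw [h0, zero_add] at hr
    exact lt_of_lt_of_le hr (hmono U V hUne V (fun x hx => hx))
  rcases eq_or_ne (volume V) 0 with h0 | hV0
  · rw [h0, add_zero] at hr
    refine lt_of_lt_of_le hr ?_
    rw [add_comm U V]
    exact hmono V U hVne U (fun x hx => hx)
  obtain ⟨y', hy', z', hz', hrlt⟩ := ENNReal.exists_lt_add_of_lt_add hr hU0 hV0
  obtain ⟨K, hKU, hKc, hKv⟩ := hU.exists_lt_isCompact hy'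
  obtain ⟨L, hLV, hLc, hLv⟩ := hV.exists_lt_isCompact hz'
  have hKne : K.Nonempty := nonempty_of_measure_ne_zero (lt_of_le_of_lt (zero_le ..) hKv).ne'
  have hLne : L.Nonempty := nonempty_of_measure_ne_zero (lt_of_le_of_lt (zero_le ..) hLv).ne'
  calc r < y' + z' := hrlt
    _ ≤ volume K + volume L := add_le_add hKv.le hLv.le
    _ ≤ volume (K + L) := oneDim_compact K L hKc hLc hKne hLne
    _ ≤ volume (U + V) := measure_mono (add_subset_add hKU hLV)

lemma vol_smul_real (c : ℝ) (U : Set ℝ) : volume (c • U) = ENNReal.ofReal |c| * volume U := by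
  have := Measure.addHaar_smul (volume : Measure ℝ) c U
  simpa using this

lemma oneDim_scaled (t : ℝ) (ht0 : 0 < t) (ht1 : t < 1) (U V : Set ℝ)
    (hU : MeasurableSet U) (hV : MeasurableSet V) (hUne : U.Nonempty) (hVne : V.Nonempty) :
    ENNReal.ofReal t * volume U + ENNReal.ofReal (1 - t) * volume V
      ≤ volume (t • U + (1 - t) • V) := by
  have h1 : volume (t • U) = ENNReal.ofReal t * volume U := by
    rw [vol_smul_real, abs_of_pos ht0]
  have h2 : volume ((1 - t) • V) = ENNReal.ofReal (1 - t) * volume V := by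
    rw [vol_smul_real, abs_of_pos (by linarith)]
  rw [← h1, ← h2]
  exact oneDim_meas _ _ (hU.const_smul₀ t) (hV.const_smul₀ (1 - t))
    (hUne.smul_set) (hVne.smul_set)

lemma gm_le_am (t : ℝ) (ht0 : 0 < t) (ht1 : t < 1) (x y : ℝ≥0∞) :
    x ^ t * y ^ (1 - t) ≤ ENNReal.ofReal t * x + ENNReal.ofReal (1 - t) * y := by
  rcases eq_or_ne x ∞ with rfl | hx
  · have : ENNReal.ofReal t * ⊤ + ENNReal.ofReal (1 - t) * y = ⊤ := by
      rw [ENNReal.mul_top (ENNReal.ofReal_pos.mpr ht0).ne', top_add]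
    rw [this]; exact le_top
  rcases eq_or_ne y ∞ with rfl | hy
  · have : ENNReal.ofReal t * x + ENNReal.ofReal (1 - t) * ⊤ = ⊤ := by
      rw [ENNReal.mul_top (ENNReal.ofReal_pos.mpr (by linarith : (0:ℝ) < 1 - t)).ne', add_top]
    rw [this]; exact le_top
  have hx' : x = ENNReal.ofReal x.toReal := (ENNReal.ofReal_toReal hx).symm
  have hy' : y = ENNReal.ofReal y.toReal := (ENNReal.ofReal_toReal hy).symm
  rw [hx', hy', ENNReal.ofReal_rpow_of_nonneg ENNReal.toReal_nonneg ht0.le,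
    ENNReal.ofReal_rpow_of_nonneg ENNReal.toReal_nonneg (by linarith : (0:ℝ) ≤ 1 - t),
    ← ENNReal.ofReal_mul (Real.rpow_nonneg ENNReal.toReal_nonneg t), ← ENNReal.ofReal_mul ht0.le,
    ← ENNReal.ofReal_mul (by linarith : (0:ℝ) ≤ 1 - t), ← ENNReal.ofReal_add (mul_nonneg ht0.le ENNReal.toReal_nonneg) (mul_nonneg (by linarith) ENNReal.toReal_nonneg)]
  exact ENNReal.ofReal_le_ofReal (Real.geom_mean_le_arith_mean2_weighted ht0.le
    (by linarith) ENNReal.toReal_nonneg ENNReal.toReal_nonneg (by ring))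

variable {E : Type*} [AddCommGroup E] [Module ℝ E]

lemma slice_incl (A B : Set (ℝ × E)) (t s x' x'' : ℝ) :
    t • {y | (x', y) ∈ A} + s • {y | (x'', y) ∈ B}
      ⊆ {y | (t * x' + s * x'', y) ∈ t • A + s • B} := by
  rintro _ ⟨_, ⟨a, ha, rfl⟩, _, ⟨b, hb, rfl⟩, rfl⟩
  refine ⟨t • (x', a), smul_mem_smul_set ha, s • (x'', b), smul_mem_smul_set hb, ?_⟩
  simp [Prod.smul_mk, Prod.mk_add_mk, smul_eq_mul]

lemma slice_compact {F : Type*} [TopologicalSpace F] [T2Space F] (A : Set (ℝ × F)) (hA : IsCompact A)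
    (x : ℝ) : IsCompact {y | (x, y) ∈ A} := by
  have hcl : IsClosed {y | (x, y) ∈ A} := by
    have : {y | (x, y) ∈ A} = (fun y => (x, y)) ⁻¹' A := rfl
    rw [this]
    exact hA.isClosed.preimage (Continuous.prodMk_right x)
  refine IsCompact.of_isClosed_subset (hA.image continuous_snd) hcl ?_
  intro y hy
  exact ⟨(x, y), hy, rfl⟩

def BMn (n : ℕ) : Prop :=
  ∀ (C D : Set (Fin n → ℝ)), IsCompact C → IsCompact D → C.Nonempty → D.Nonempty →
    ∀ t : ℝ, 0 < t → t < 1 → volume C ^ t * volume D ^ (1 - t) ≤ volume (t • C + (1 - t) • D)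

lemma slice_lower (n : ℕ) (bmn : BMn n)
    (A B : Set (ℝ × (Fin n → ℝ))) (hA : IsCompact A) (hB : IsCompact B)
    (t : ℝ) (ht0 : 0 < t) (ht1 : t < 1) (x' x'' : ℝ)
    (hA' : {y | (x', y) ∈ A}.Nonempty) (hB' : {y | (x'', y) ∈ B}.Nonempty) :
    volume {y | (x', y) ∈ A} ^ t * volume {y | (x'', y) ∈ B} ^ (1 - t)
      ≤ volume {y | (t * x' + (1 - t) * x'', y) ∈ t • A + (1 - t) • B} := by
  have h1 := bmn _ _ (slice_compact A hA x') (slice_compact B hB x'') hA' hB' t ht0 ht1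
  exact h1.trans (measure_mono (slice_incl A B t (1 - t) x' x''))

lemma bm_step (n : ℕ) (bmn : BMn n)
    (A B : Set (ℝ × (Fin n → ℝ))) (hA : IsCompact A) (hB : IsCompact B)
    (hAne : A.Nonempty) (hBne : B.Nonempty) (t : ℝ) (ht0 : 0 < t) (ht1 : t < 1) :
    volume A ^ t * volume B ^ (1 - t) ≤ volume (t • A + (1 - t) • B) := by
  have ht1' : (0:ℝ) < 1 - t := by linarith
  set S := t • A + (1 - t) • B with hSdef
  have hS : IsCompact S := (hA.smul t).add (hB.smul (1 - t))
  have hAm : MeasurableSet A := hA.measurableSet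
  have hBm : MeasurableSet B := hB.measurableSet
  have hSm : MeasurableSet S := hS.measurableSet
  set f : ℝ → ℝ≥0∞ := fun x => volume (Prod.mk x ⁻¹' A) with hfdef
  set g : ℝ → ℝ≥0∞ := fun x => volume (Prod.mk x ⁻¹' B) with hgdef
  set h : ℝ → ℝ≥0∞ := fun x => volume (Prod.mk x ⁻¹' S) with hhdef
  have hf : Measurable f := measurable_measure_prodMk_left hAm
  have hg : Measurable g := measurable_measure_prodMk_left hBm
  have hh : Measurable h := measurable_measure_prodMk_left hSm
  have hvolA : volume A = ∫⁻ x, f x := by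
    rw [Measure.volume_eq_prod]; exact Measure.prod_apply hAm
  have hvolB : volume B = ∫⁻ x, g x := by
    rw [Measure.volume_eq_prod]; exact Measure.prod_apply hBm
  have hvolS : volume S = ∫⁻ x, h x := by
    rw [Measure.volume_eq_prod]; exact Measure.prod_apply hSm
  -- degenerate cases
  rcases eq_or_ne (volume A) 0 with hA0 | hA0
  · rw [hA0, ENNReal.zero_rpow_of_pos ht0, zero_mul]; exact zero_le ..
  rcases eq_or_ne (volume B) 0 with hB0 | hB0
  · rw [hB0, ENNReal.zero_rpow_of_pos ht1', mul_zero]; exact zero_le ..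
  -- bounds on slice functions
  have hf_fin : ∀ x, f x ≠ ∞ := fun x =>
    ((measure_mono (fun y hy => ⟨(x, y), hy, rfl⟩ : Prod.mk x ⁻¹' A ⊆ Prod.snd '' A)).trans_lt
      (hA.image continuous_snd).measure_lt_top).ne
  have hg_fin : ∀ x, g x ≠ ∞ := fun x =>
    ((measure_mono (fun y hy => ⟨(x, y), hy, rfl⟩ : Prod.mk x ⁻¹' B ⊆ Prod.snd '' B)).trans_lt
      (hB.image continuous_snd).measure_lt_top).ne
  have hh_fin : ∀ x, h x ≠ ∞ := fun x =>
    ((measure_mono (fun y hy => ⟨(x, y), hy, rfl⟩ : Prod.mk x ⁻¹' S ⊆ Prod.snd '' S)).trans_lt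
      (hS.image continuous_snd).measure_lt_top).ne
  set MA := ⨆ x, f x with hMAdef
  set MB := ⨆ x, g x with hMBdef
  have hMA0 : MA ≠ 0 := by
    intro h0
    apply hA0
    rw [hvolA]
    have hz : ∀ x, f x = 0 := fun x => le_antisymm (h0 ▸ le_iSup f x) (zero_le ..)
    simp only [hz, lintegral_zero]
  have hMB0 : MB ≠ 0 := by
    intro h0
    apply hB0
    rw [hvolB]
    have hz : ∀ x, g x = 0 := fun x => le_antisymm (h0 ▸ le_iSup g x) (zero_le ..)
    simp only [hz, lintegral_zero]
  have hMA_top : MA ≠ ∞ := by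
    refine ((iSup_le fun x => measure_mono
      (fun y hy => ⟨(x, y), hy, rfl⟩ : Prod.mk x ⁻¹' A ⊆ Prod.snd '' A)).trans_lt
      (hA.image continuous_snd).measure_lt_top).ne
  have hMB_top : MB ≠ ∞ := by
    refine ((iSup_le fun x => measure_mono
      (fun y hy => ⟨(x, y), hy, rfl⟩ : Prod.mk x ⁻¹' B ⊆ Prod.snd '' B)).trans_lt
      (hB.image continuous_snd).measure_lt_top).ne
  set mA := MA.toReal with hmAdef
  set mB := MB.toReal with hmBdef
  have hmA0 : 0 < mA := ENNReal.toReal_pos hMA0 hMA_top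
  have hmB0 : 0 < mB := ENNReal.toReal_pos hMB0 hMB_top
  set M : ℝ := mA ^ t * mB ^ (1 - t) with hMdef
  have hM0 : 0 < M := by positivity
  set cA : ℝ := M / mA with hcAdef
  set cB : ℝ := M / mB with hcBdef
  have hcA0 : 0 < cA := by positivity
  have hcB0 : 0 < cB := by positivity
  set fr : ℝ → ℝ := fun x => (f x).toReal with hfrdef
  set gr : ℝ → ℝ := fun x => (g x).toReal with hgrdef
  set hr : ℝ → ℝ := fun x => (h x).toReal with hhrdef
  have hfr : Measurable fr := hf.ennreal_toReal
  have hgr : Measurable gr := hg.ennreal_toReal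
  have hhr : Measurable hr := hh.ennreal_toReal
  have hfr_le : ∀ x, fr x ≤ mA :=
    fun x => ENNReal.toReal_mono hMA_top (le_iSup f x)
  have hgr_le : ∀ x, gr x ≤ mB :=
    fun x => ENNReal.toReal_mono hMB_top (le_iSup g x)
  -- real identity : cA ^ t * cB ^ (1 - t) = 1
  have hcc : cA ^ t * cB ^ (1 - t) = 1 := by
    rw [hcAdef, hcBdef, Real.div_rpow hM0.le hmA0.le, Real.div_rpow hM0.le hmB0.le,
      div_mul_div_comm, ← Real.rpow_add hM0, add_sub_cancel, Real.rpow_one, hMdef]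
    field_simp
  -- key superlevel claim
  have key : ∀ lam ∈ Ioo (0:ℝ) M,
      ENNReal.ofReal t * volume {x | lam < fr x * cA} +
        ENNReal.ofReal (1 - t) * volume {x | lam < gr x * cB}
      ≤ volume {x | lam < hr x} := by
    intro lam ⟨hlam0, hlamM⟩
    set U := {x | lam < fr x * cA} with hUdef
    set V := {x | lam < gr x * cB} with hVdef
    have hU : MeasurableSet U := measurableSet_lt measurable_const (hfr.mul_const cA)
    have hV : MeasurableSet V := measurableSet_lt measurable_const (hgr.mul_const cB)
    have hUne : U.Nonempty := by
      have hlt : ENNReal.ofReal (lam / cA) < MA := by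
        rw [ENNReal.ofReal_lt_iff_lt_toReal (by positivity) hMA_top, ← hmAdef,
          div_lt_iff₀ hcA0]
        calc lam < M := hlamM
          _ = mA * cA := by rw [hcAdef]; field_simp
      obtain ⟨x, hx⟩ := lt_iSup_iff.mp hlt
      refine ⟨x, ?_⟩
      rw [hUdef, mem_setOf_eq, ← div_lt_iff₀ hcA0]
      rw [ENNReal.ofReal_lt_iff_lt_toReal (by positivity) (hf_fin x)] at hx
      exact hx
    have hVne : V.Nonempty := by
      have hlt : ENNReal.ofReal (lam / cB) < MB := by
        rw [ENNReal.ofReal_lt_iff_lt_toReal (by positivity) hMB_top, ← hmBdef,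
          div_lt_iff₀ hcB0]
        calc lam < M := hlamM
          _ = mB * cB := by rw [hcBdef]; field_simp
      obtain ⟨x, hx⟩ := lt_iSup_iff.mp hlt
      refine ⟨x, ?_⟩
      rw [hVdef, mem_setOf_eq, ← div_lt_iff₀ hcB0]
      rw [ENNReal.ofReal_lt_iff_lt_toReal (by positivity) (hg_fin x)] at hx
      exact hx
    refine (oneDim_scaled t ht0 ht1 U V hU hV hUne hVne).trans ?_
    refine measure_mono ?_
    rintro _ ⟨_, ⟨x', hx', rfl⟩, _, ⟨x'', hx'', rfl⟩, rfl⟩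
    simp only [smul_eq_mul, mem_setOf_eq]
    -- now show lam < hr (t * x' + (1 - t) * x'')
    have hfx' : ENNReal.ofReal (lam / cA) < f x' := by
      rw [ENNReal.ofReal_lt_iff_lt_toReal (by positivity) (hf_fin x'), div_lt_iff₀ hcA0]
      exact hx'
    have hgx'' : ENNReal.ofReal (lam / cB) < g x'' := by
      rw [ENNReal.ofReal_lt_iff_lt_toReal (by positivity) (hg_fin x''), div_lt_iff₀ hcB0]
      exact hx''
    have hA'ne : {y | (x', y) ∈ A}.Nonempty := by
      refine nonempty_of_measure_ne_zero (μ := volume) (s := {y | (x', y) ∈ A}) ?_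
      exact (lt_of_le_of_lt (zero_le ..) hfx').ne'
    have hB'ne : {y | (x'', y) ∈ B}.Nonempty := by
      refine nonempty_of_measure_ne_zero (μ := volume) (s := {y | (x'', y) ∈ B}) ?_
      exact (lt_of_le_of_lt (zero_le ..) hgx'').ne'
    have hlow := slice_lower n bmn A B hA hB t ht0 ht1 x' x'' hA'ne hB'ne
    have hstrict : ENNReal.ofReal lam <
        volume {y | (x', y) ∈ A} ^ t * volume {y | (x'', y) ∈ B} ^ (1 - t) := by
      have heq : ENNReal.ofReal lam =
          ENNReal.ofReal (lam / cA) ^ t * ENNReal.ofReal (lam / cB) ^ (1 - t) := by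
        rw [ENNReal.ofReal_rpow_of_nonneg (by positivity) ht0.le,
          ENNReal.ofReal_rpow_of_nonneg (by positivity) ht1'.le,
          ← ENNReal.ofReal_mul (by positivity)]
        congr 1
        rw [Real.div_rpow hlam0.le hcA0.le, Real.div_rpow hlam0.le hcB0.le,
          div_mul_div_comm, ← Real.rpow_add hlam0, add_sub_cancel, Real.rpow_one, hcc]
        field_simp
      rw [heq]
      exact ENNReal.mul_lt_mul (ENNReal.rpow_lt_rpow hfx' ht0)
        (ENNReal.rpow_lt_rpow hgx'' ht1')
    have hfinal : ENNReal.ofReal lam < h (t * x' + (1 - t) * x'') :=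
      lt_of_lt_of_le hstrict hlow
    rw [hhrdef]
    rw [← ENNReal.ofReal_lt_iff_lt_toReal hlam0.le (hh_fin _)]
    exact hfinal
  -- antitone measurability of superlevel measures
  have hantiA : Measurable fun lam : ℝ => volume {x | lam < fr x * cA} := by
    refine Antitone.measurable fun a b hab => measure_mono fun x hx => lt_of_le_of_lt hab hx
  have hantiB : Measurable fun lam : ℝ => volume {x | lam < gr x * cB} := by
    refine Antitone.measurable fun a b hab => measure_mono fun x hx => lt_of_le_of_lt hab hx
  have hantiS : Measurable fun lam : ℝ => volume {x | lam < hr x} := by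
    refine Antitone.measurable fun a b hab => measure_mono fun x hx => lt_of_le_of_lt hab hx
  -- layer cake for h
  have hS_eq : volume S = ∫⁻ lam in Ioi (0:ℝ), volume {x | lam < hr x} := by
    rw [hvolS]
    calc ∫⁻ x, h x = ∫⁻ x, ENNReal.ofReal (hr x) := by
          refine lintegral_congr fun x => (ENNReal.ofReal_toReal (hh_fin x)).symm
      _ = ∫⁻ lam in Ioi (0:ℝ), volume {x | lam < hr x} :=
          lintegral_eq_lintegral_meas_lt volume (ae_of_all _ fun x => ENNReal.toReal_nonneg)
            hhr.aemeasurable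
  have hsplit : Ioi (0:ℝ) = Ioo 0 M ∪ Ici M := by
    ext x
    simp only [mem_Ioi, mem_union, mem_Ioo, mem_Ici]
    constructor
    · intro hx; rcases lt_or_ge x M with hxM | hxM
      · exact Or.inl ⟨hx, hxM⟩
      · exact Or.inr hxM
    · rintro (⟨hx, _⟩ | hx)
      · exact hx
      · linarith
  have hdisj : Disjoint (Ioo (0:ℝ) M) (Ici M) := by
    refine Set.disjoint_left.mpr fun x hx hx' => ?_
    exact absurd hx.2 (not_lt.mpr hx')
  have hA_eq : ∫⁻ lam in Ioo (0:ℝ) M, volume {x | lam < fr x * cA}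
      = volume A * ENNReal.ofReal cA := by
    have vanish : ∫⁻ lam in Ici M, volume {x | lam < fr x * cA} = 0 := by
      rw [setLIntegral_congr_fun_ae measurableSet_Ici (ae_of_all _ fun lam hlam => ?_),
        lintegral_zero]
      have hempty : {x | lam < fr x * cA} = ∅ := by
        refine eq_empty_iff_forall_notMem.mpr fun x hx => ?_
        have h1 : fr x * cA ≤ mA * cA := mul_le_mul_of_nonneg_right (hfr_le x) hcA0.le
        have h2 : mA * cA = M := by rw [hcAdef]; field_simp
        have hlam' : M ≤ lam := hlam
        have hx' : lam < fr x * cA := hx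
        linarith
      rw [hempty, measure_empty]
    have full : ∫⁻ lam in Ioi (0:ℝ), volume {x | lam < fr x * cA}
        = volume A * ENNReal.ofReal cA := by
      have hmeas : Measurable fun x => fr x * cA := hfr.mul_const _
      rw [← lintegral_eq_lintegral_meas_lt volume
        (ae_of_all _ fun x => mul_nonneg ENNReal.toReal_nonneg hcA0.le) hmeas.aemeasurable]
      calc ∫⁻ x, ENNReal.ofReal (fr x * cA)
          = ∫⁻ x, f x * ENNReal.ofReal cA := by
            refine lintegral_congr fun x => ?_
            rw [ENNReal.ofReal_mul ENNReal.toReal_nonneg, ENNReal.ofReal_toReal (hf_fin x)]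
        _ = (∫⁻ x, f x) * ENNReal.ofReal cA := lintegral_mul_const _ hf
        _ = volume A * ENNReal.ofReal cA := by rw [hvolA]
    rw [hsplit, lintegral_union measurableSet_Ici hdisj, vanish, add_zero] at full
    exact full
  have hB_eq : ∫⁻ lam in Ioo (0:ℝ) M, volume {x | lam < gr x * cB}
      = volume B * ENNReal.ofReal cB := by
    have vanish : ∫⁻ lam in Ici M, volume {x | lam < gr x * cB} = 0 := by
      rw [setLIntegral_congr_fun_ae measurableSet_Ici (ae_of_all _ fun lam hlam => ?_),
        lintegral_zero]
      have hempty : {x | lam < gr x * cB} = ∅ := by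
        refine eq_empty_iff_forall_notMem.mpr fun x hx => ?_
        have h1 : gr x * cB ≤ mB * cB := mul_le_mul_of_nonneg_right (hgr_le x) hcB0.le
        have h2 : mB * cB = M := by rw [hcBdef]; field_simp
        have hlam' : M ≤ lam := hlam
        have hx' : lam < gr x * cB := hx
        linarith
      rw [hempty, measure_empty]
    have full : ∫⁻ lam in Ioi (0:ℝ), volume {x | lam < gr x * cB}
        = volume B * ENNReal.ofReal cB := by
      have hmeas : Measurable fun x => gr x * cB := hgr.mul_const _
      rw [← lintegral_eq_lintegral_meas_lt volume
        (ae_of_all _ fun x => mul_nonneg ENNReal.toReal_nonneg hcB0.le) hmeas.aemeasurable]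
      calc ∫⁻ x, ENNReal.ofReal (gr x * cB)
          = ∫⁻ x, g x * ENNReal.ofReal cB := by
            refine lintegral_congr fun x => ?_
            rw [ENNReal.ofReal_mul ENNReal.toReal_nonneg, ENNReal.ofReal_toReal (hg_fin x)]
        _ = (∫⁻ x, g x) * ENNReal.ofReal cB := lintegral_mul_const _ hg
        _ = volume B * ENNReal.ofReal cB := by rw [hvolB]
    rw [hsplit, lintegral_union measurableSet_Ici hdisj, vanish, add_zero] at full
    exact full
  have bigineq : ENNReal.ofReal t * (volume A * ENNReal.ofReal cA)
      + ENNReal.ofReal (1 - t) * (volume B * ENNReal.ofReal cB) ≤ volume S := by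
    calc ENNReal.ofReal t * (volume A * ENNReal.ofReal cA)
        + ENNReal.ofReal (1 - t) * (volume B * ENNReal.ofReal cB)
        = ENNReal.ofReal t * (∫⁻ lam in Ioo (0:ℝ) M, volume {x | lam < fr x * cA})
          + ENNReal.ofReal (1 - t) * (∫⁻ lam in Ioo (0:ℝ) M, volume {x | lam < gr x * cB}) := by
          rw [hA_eq, hB_eq]
      _ = ∫⁻ lam in Ioo (0:ℝ) M, (ENNReal.ofReal t * volume {x | lam < fr x * cA}
          + ENNReal.ofReal (1 - t) * volume {x | lam < gr x * cB}) := by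
          rw [lintegral_add_left (hantiA.const_mul _), lintegral_const_mul _ hantiA,
            lintegral_const_mul _ hantiB]
      _ ≤ ∫⁻ lam in Ioo (0:ℝ) M, volume {x | lam < hr x} :=
          setLIntegral_mono hantiS key
      _ ≤ ∫⁻ lam in Ioi (0:ℝ), volume {x | lam < hr x} := lintegral_mono_set Ioo_subset_Ioi_self
      _ = volume S := hS_eq.symm
  -- final combination
  have hvolA_top : volume A ≠ ∞ := hA.measure_lt_top.ne
  have hvolB_top : volume B ≠ ∞ := hB.measure_lt_top.ne
  have hone : ENNReal.ofReal cA ^ t * ENNReal.ofReal cB ^ (1 - t) = 1 := by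
    rw [ENNReal.ofReal_rpow_of_nonneg hcA0.le ht0.le,
      ENNReal.ofReal_rpow_of_nonneg hcB0.le ht1'.le,
      ← ENNReal.ofReal_mul (by positivity), hcc, ENNReal.ofReal_one]
  calc volume A ^ t * volume B ^ (1 - t)
      = volume A ^ t * volume B ^ (1 - t)
        * (ENNReal.ofReal cA ^ t * ENNReal.ofReal cB ^ (1 - t)) := by rw [hone, mul_one]
    _ = (volume A * ENNReal.ofReal cA) ^ t * (volume B * ENNReal.ofReal cB) ^ (1 - t) := by
        rw [ENNReal.mul_rpow_of_ne_top hvolA_top ENNReal.ofReal_ne_top,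
          ENNReal.mul_rpow_of_ne_top hvolB_top ENNReal.ofReal_ne_top,
          mul_mul_mul_comm]
    _ ≤ ENNReal.ofReal t * (volume A * ENNReal.ofReal cA)
        + ENNReal.ofReal (1 - t) * (volume B * ENNReal.ofReal cB) := gm_le_am t ht0 ht1 _ _
    _ ≤ volume S := bigineq

lemma vol_univ_fin_zero : volume (univ : Set (Fin 0 → ℝ)) = 1 := by
  have : (univ : Set (Fin 0 → ℝ)) = Set.pi univ (fun _ => univ) := by simp
  rw [this, volume_pi_pi]
  simp

lemma bm_all : ∀ n, BMn n := by
  intro n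
  induction n with
  | zero =>
    intro C D hC hD hCne hDne t ht0 ht1
    have hsub : ∀ (P : Set (Fin 0 → ℝ)), P.Nonempty → P = univ := by
      intro P ⟨p, hp⟩
      refine eq_univ_of_forall fun x => ?_
      rwa [Subsingleton.elim x p]
    have hC' := hsub C hCne
    have hD' := hsub D hDne
    have hS' := hsub (t • C + (1 - t) • D)
      ((hCne.smul_set).add (hDne.smul_set))
    rw [hS', hC', hD', vol_univ_fin_zero, ENNReal.one_rpow, ENNReal.one_rpow, one_mul]
  | succ n ih =>
    intro C D hC hD hCne hDne t ht0 ht1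
    set e := MeasurableEquiv.piFinSuccAbove (fun _ : Fin (n + 1) => ℝ) 0 with hedef
    have hecoe : ∀ x : Fin (n + 1) → ℝ, e x = (x 0, Fin.removeNth 0 x) := fun x => rfl
    have he_cont : Continuous e := by
      rw [show ⇑e = fun x : Fin (n+1) → ℝ => (x 0, Fin.removeNth 0 x) from funext hecoe]
      exact (continuous_apply 0).prodMk (continuous_pi fun j => continuous_apply _)
    have he_add : ∀ a b : Fin (n + 1) → ℝ, e (a + b) = e a + e b := by
      intro a b
      rw [hecoe, hecoe, hecoe]
      rfl
    have he_smul : ∀ (r : ℝ) (a : Fin (n + 1) → ℝ), e (r • a) = r • e a := by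
      intro r a
      rw [hecoe, hecoe]
      rfl
    have himg_add : ∀ (P Q : Set (Fin (n + 1) → ℝ)), ⇑e '' (P + Q) = ⇑e '' P + ⇑e '' Q := by
      intro P Q
      ext z
      constructor
      · rintro ⟨_, ⟨p, hp, q, hq, rfl⟩, rfl⟩
        exact ⟨e p, mem_image_of_mem _ hp, e q, mem_image_of_mem _ hq, (he_add p q).symm⟩
      · rintro ⟨_, ⟨p, hp, rfl⟩, _, ⟨q, hq, rfl⟩, rfl⟩
        exact ⟨p + q, add_mem_add hp hq, he_add p q⟩
    have himg_smul : ∀ (r : ℝ) (P : Set (Fin (n + 1) → ℝ)), ⇑e '' (r • P) = r • (⇑e '' P) := by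
      intro r P
      ext z
      constructor
      · rintro ⟨_, ⟨p, hp, rfl⟩, rfl⟩
        exact ⟨e p, mem_image_of_mem _ hp, (he_smul r p).symm⟩
      · rintro ⟨_, ⟨p, hp, rfl⟩, rfl⟩
        exact ⟨r • p, smul_mem_smul_set hp, he_smul r p⟩
    have hmp := volume_preserving_piFinSuccAbove (fun _ : Fin (n + 1) => ℝ) 0
    have hvol_img : ∀ (P : Set (Fin (n + 1) → ℝ)), MeasurableSet P →
        volume (⇑e '' P) = volume P := by
      intro P hP
      rw [MeasurableEquiv.image_eq_preimage_symm]
      exact (hmp.symm e).measure_preimage hP.nullMeasurableSet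
    have hCim : IsCompact (⇑e '' C) := hC.image he_cont
    have hDim : IsCompact (⇑e '' D) := hD.image he_cont
    calc volume C ^ t * volume D ^ (1 - t)
        = volume (⇑e '' C) ^ t * volume (⇑e '' D) ^ (1 - t) := by
          rw [hvol_img C hC.measurableSet, hvol_img D hD.measurableSet]
      _ ≤ volume (t • (⇑e '' C) + (1 - t) • (⇑e '' D)) :=
          bm_step n ih _ _ hCim hDim (hCne.image _) (hDne.image _) t ht0 ht1
      _ = volume (⇑e '' (t • C + (1 - t) • D)) := by
          rw [himg_add, himg_smul, himg_smul]
      _ = volume (t • C + (1 - t) • D) := by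
          refine hvol_img _ ?_
          exact ((hC.smul t).add (hD.smul (1 - t))).measurableSet

theorem stmt6 (n : ℕ) (A B : Set (ℝ × (Fin n → ℝ))) (t : ℝ) (ht : t ∈ Set.Ioo (0:ℝ) 1)
    (hA : IsCompact A) (hB : IsCompact B)
    (lam γ γt : ℝ) (hlam : 0 < lam) (hγ : 0 < γ) (hγt : 0 < γt)
    (hnorm : γ ^ t * γt ^ (1 - t) = 1)
    (hAne : {x : ℝ | ENNReal.ofReal (γ * lam) < volume {y | (x, y) ∈ A}}.Nonempty)
    (hBne : {x : ℝ | ENNReal.ofReal (γt * lam) < volume {y | (x, y) ∈ B}}.Nonempty) :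
    t • {x : ℝ | ENNReal.ofReal (γ * lam) < volume {y | (x, y) ∈ A}}
      + (1 - t) • {x : ℝ | ENNReal.ofReal (γt * lam) < volume {y | (x, y) ∈ B}}
    ⊆ {x : ℝ | ENNReal.ofReal lam < volume {y | (x, y) ∈ t • A + (1 - t) • B}} := by
  obtain ⟨ht0, ht1⟩ := ht
  have ht1' : (0:ℝ) < 1 - t := by linarith
  rintro _ ⟨_, ⟨x', hx', rfl⟩, _, ⟨x'', hx'', rfl⟩, rfl⟩
  simp only [mem_setOf_eq] at hx' hx'' ⊢
  rw [smul_eq_mul, smul_eq_mul]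
  have hA'ne : {y | (x', y) ∈ A}.Nonempty :=
    nonempty_of_measure_ne_zero (μ := volume) (lt_of_le_of_lt (zero_le ..) hx').ne'
  have hB'ne : {y | (x'', y) ∈ B}.Nonempty :=
    nonempty_of_measure_ne_zero (μ := volume) (lt_of_le_of_lt (zero_le ..) hx'').ne'
  have hlow := slice_lower n (bm_all n) A B hA hB t ht0 ht1 x' x'' hA'ne hB'ne
  have hreal : (γ * lam) ^ t * (γt * lam) ^ (1 - t) = lam := by
    rw [Real.mul_rpow hγ.le hlam.le, Real.mul_rpow hγt.le hlam.le]
    calc γ ^ t * lam ^ t * (γt ^ (1 - t) * lam ^ (1 - t))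
        = (γ ^ t * γt ^ (1 - t)) * (lam ^ t * lam ^ (1 - t)) := by ring
      _ = lam := by
          rw [hnorm, one_mul, ← Real.rpow_add hlam]
          norm_num
  have hstrict : ENNReal.ofReal lam <
      volume {y | (x', y) ∈ A} ^ t * volume {y | (x'', y) ∈ B} ^ (1 - t) := by
    calc ENNReal.ofReal lam
        = ENNReal.ofReal (γ * lam) ^ t * ENNReal.ofReal (γt * lam) ^ (1 - t) := by
          rw [ENNReal.ofReal_rpow_of_nonneg (by positivity) ht0.le,
            ENNReal.ofReal_rpow_of_nonneg (by positivity) ht1'.le,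
            ← ENNReal.ofReal_mul (by positivity), hreal]
      _ < _ := ENNReal.mul_lt_mul (ENNReal.rpow_lt_rpow hx' ht0)
          (ENNReal.rpow_lt_rpow hx'' ht1')
  exact hstrict.trans_le hlow
end

section
/- Let A, B ⊆ ℝ^d be compact, t ∈ (0,1), b ∈ ℝ, and let B^- = B ∩ π^{-1}((-∞,b]), B^+ = B \ B^-, where π : ℝ^d → ℝ is projection to the first coordinate. Let a = sup{x : A_x ≠ ∅} and suppose |A_a| ≥ sup_{x ≥ b} |B_x|. If |A| = 1 + O(δ), |B| = 1 + O(δ), and |tA + (1-t)B| < |A|^t |B|^{1-t} + δ, then |tA + (1-t)B^-| < |A|^t |B^-|^{1-t} + O(δ) + O(|B^+|^2). -/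
open MeasureTheory Set
open scoped Pointwise ENNReal NNReal

lemma aux_amgm {t : ℝ} (ht : 0 < t) (ht1 : t < 1) (x y : ℝ≥0∞) :
    x ^ t * y ^ (1 - t) ≤ ENNReal.ofReal t * x + ENNReal.ofReal (1 - t) * y := by
  have h1t : (0:ℝ) < 1 - t := by linarith
  rcases eq_or_ne x ⊤ with rfl | hx
  · have hR : ENNReal.ofReal t * (⊤:ℝ≥0∞) = ⊤ := by
      rw [ENNReal.mul_top]
      simpa using (ENNReal.ofReal_pos.2 ht).ne'
    rw [hR, top_add]
    exact le_top
  rcases eq_or_ne y ⊤ with rfl | hy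
  · have hR : ENNReal.ofReal (1 - t) * (⊤:ℝ≥0∞) = ⊤ := by
      rw [ENNReal.mul_top]
      simpa using (ENNReal.ofReal_pos.2 h1t).ne'
    rw [hR, add_top]
    exact le_top
  lift x to NNReal using hx
  lift y to NNReal using hy
  have hw : t.toNNReal + (1 - t).toNNReal = 1 := by
    rw [← Real.toNNReal_add ht.le h1t.le]
    norm_num
  have key := NNReal.geom_mean_le_arith_mean2_weighted t.toNNReal (1 - t).toNNReal x y hw
  have e1 : ((t.toNNReal : ℝ)) = t := Real.coe_toNNReal t ht.le
  have e2 : (((1 - t).toNNReal : ℝ)) = 1 - t := Real.coe_toNNReal _ h1t.le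
  rw [e1, e2] at key
  calc (x:ℝ≥0∞) ^ t * (y:ℝ≥0∞) ^ (1 - t)
      = ((x ^ t * y ^ (1 - t) : ℝ≥0) : ℝ≥0∞) := by
        rw [ENNReal.coe_mul, ENNReal.coe_rpow_of_nonneg _ ht.le,
          ENNReal.coe_rpow_of_nonneg _ h1t.le]
    _ ≤ ((t.toNNReal * x + (1 - t).toNNReal * y : ℝ≥0) : ℝ≥0∞) := by
        exact_mod_cast key
    _ = ENNReal.ofReal t * x + ENNReal.ofReal (1 - t) * y := by
        rw [ENNReal.coe_add, ENNReal.coe_mul, ENNReal.coe_mul]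
        rfl

lemma aux_affvol {r : ℝ} (hr : 0 < r) (e : ℝ) (K : Set ℝ) :
    volume ((fun x => r * x + e) '' K) = ENNReal.ofReal r * volume K := by
  have hcomp : (fun x : ℝ => r * x + e) = (fun z : ℝ => e + z) ∘ (fun x : ℝ => r * x) := by
    funext x; simp [add_comm]
  rw [hcomp, Set.image_comp]
  have h1 : (fun z : ℝ => e + z) '' ((fun x : ℝ => r * x) '' K) = e +ᵥ ((fun x : ℝ => r * x) '' K) := by
    ext z
    simp only [Set.mem_vadd_set, vadd_eq_add, Set.mem_image]
  rw [h1, measure_vadd]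
  have h2 : (fun x : ℝ => r * x) '' K = r • K := by
    rw [← Set.image_smul]; simp [smul_eq_mul]
  rw [h2, Measure.addHaar_smul, Module.finrank_self, pow_one, abs_of_pos hr]

lemma aux_oneDim {t : ℝ} (ht : 0 < t) (ht1 : t < 1) {S T W : Set ℝ}
    (hS : S.Nonempty) (hT : T.Nonempty) (hSm : MeasurableSet S) (hTm : MeasurableSet T)
    (hsub : ∀ x ∈ S, ∀ y ∈ T, t * x + (1 - t) * y ∈ W) :
    ENNReal.ofReal t * volume S + ENNReal.ofReal (1 - t) * volume T ≤ volume W := by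
  have h1t : (0:ℝ) < 1 - t := by linarith
  have key : ∀ KS : Set ℝ, KS ⊆ S → IsCompact KS → KS.Nonempty →
      ∀ KT : Set ℝ, KT ⊆ T → IsCompact KT → KT.Nonempty →
      ENNReal.ofReal t * volume KS + ENNReal.ofReal (1 - t) * volume KT ≤ volume W := by
    intro KS hKSsub hKSc hKSne KT hKTsub hKTc hKTne
    set M := sSup KS with hM
    have hMmem : M ∈ KS := hKSc.sSup_mem hKSne
    set m := sInf KT with hm
    have hmmem : m ∈ KT := hKTc.sInf_mem hKTne
    set c := t * M + (1 - t) * m with hc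
    set E1 := (fun x => t * x + (1 - t) * m) '' KS with hE1
    set E2 := (fun y => t * M + (1 - t) * y) '' KT with hE2
    have hE1sub : E1 ⊆ W ∩ Iic c := by
      rintro _ ⟨x, hx, rfl⟩
      refine ⟨hsub x (hKSsub hx) m (hKTsub hmmem), ?_⟩
      have : x ≤ M := le_csSup hKSc.bddAbove hx
      simp only [mem_Iic, hc]
      nlinarith
    have hE2sub : E2 ⊆ W ∩ Ici c := by
      rintro _ ⟨y, hy, rfl⟩
      refine ⟨hsub M (hKSsub hMmem) y (hKTsub hy), ?_⟩
      have : m ≤ y := csInf_le hKTc.bddBelow hy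
      simp only [mem_Ici, hc]
      nlinarith
    have hvol1 : volume E1 = ENNReal.ofReal t * volume KS := aux_affvol ht _ _
    have hvol2 : volume E2 = ENNReal.ofReal (1 - t) * volume KT := by
      have : E2 = (fun y => (1 - t) * y + t * M) '' KT := by
        rw [hE2]
        apply Set.image_congr
        intro y _
        ring_nf
      rw [this]; exact aux_affvol h1t _ _
    calc ENNReal.ofReal t * volume KS + ENNReal.ofReal (1 - t) * volume KT
        = volume E1 + volume E2 := by rw [hvol1, hvol2]
      _ ≤ volume (W ∩ Iic c) + volume (W \ Iic c) := by
          refine add_le_add (measure_mono (fun z hz => hE1sub hz)) ?_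
          calc volume E2 = volume (E2 \ {c}) := (measure_diff_null (measure_singleton c)).symm
            _ ≤ volume (W \ Iic c) := by
                apply measure_mono
                rintro z ⟨hz, hzc⟩
                obtain ⟨hzW, hzge⟩ := hE2sub hz
                refine ⟨hzW, ?_⟩
                simp only [mem_Iic, not_le]
                rcases lt_or_eq_of_le (show c ≤ z from hzge) with h | h
                · exact h
                · exact absurd h.symm hzc
      _ = volume W := measure_inter_add_diff W measurableSet_Iic
  obtain ⟨x₀, hx₀⟩ := hS
  obtain ⟨y₀, hy₀⟩ := hT
  have key' : ∀ KS : Set ℝ, KS ⊆ S → IsCompact KS →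
      ∀ KT : Set ℝ, KT ⊆ T → IsCompact KT →
      ENNReal.ofReal t * volume KS + ENNReal.ofReal (1 - t) * volume KT ≤ volume W := by
    intro KS hKSsub hKSc KT hKTsub hKTc
    have h := key (insert x₀ KS) (insert_subset hx₀ hKSsub) (hKSc.insert x₀) (insert_nonempty _ _)
      (insert y₀ KT) (insert_subset hy₀ hKTsub) (hKTc.insert y₀) (insert_nonempty _ _)
    refine le_trans (add_le_add ?_ ?_) h
    · exact mul_le_mul_right (measure_mono (subset_insert _ _)) _
    · exact mul_le_mul_right (measure_mono (subset_insert _ _)) _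
  have hS' : volume S = ⨆ i : {K : Set ℝ // K ⊆ S ∧ IsCompact K}, volume i.1 := by
    rw [hSm.measure_eq_iSup_isCompact]
    apply le_antisymm
    · exact iSup_le fun K => iSup_le fun h1 => iSup_le fun h2 =>
        le_iSup_of_le (⟨K, h1, h2⟩ : {K : Set ℝ // K ⊆ S ∧ IsCompact K}) le_rfl
    · exact iSup_le fun i => le_iSup_of_le i.1 (le_iSup_of_le i.2.1 (le_iSup_of_le i.2.2 le_rfl))
  have hT' : volume T = ⨆ i : {K : Set ℝ // K ⊆ T ∧ IsCompact K}, volume i.1 := by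
    rw [hTm.measure_eq_iSup_isCompact]
    apply le_antisymm
    · exact iSup_le fun K => iSup_le fun h1 => iSup_le fun h2 =>
        le_iSup_of_le (⟨K, h1, h2⟩ : {K : Set ℝ // K ⊆ T ∧ IsCompact K}) le_rfl
    · exact iSup_le fun i => le_iSup_of_le i.1 (le_iSup_of_le i.2.1 (le_iSup_of_le i.2.2 le_rfl))
  rw [hS', hT', ENNReal.mul_iSup, ENNReal.mul_iSup]
  have : Nonempty {K : Set ℝ // K ⊆ S ∧ IsCompact K} := ⟨⟨∅, empty_subset _, isCompact_empty⟩⟩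
  have : Nonempty {K : Set ℝ // K ⊆ T ∧ IsCompact K} := ⟨⟨∅, empty_subset _, isCompact_empty⟩⟩
  exact ENNReal.iSup_add_iSup_le fun i j => key' i.1 i.2.1 i.2.2 j.1 j.2.1 j.2.2

lemma aux_scale {c : ℝ} (hc : 0 < c) (φ : ℝ → ℝ≥0∞) (hφ : Measurable φ) :
    ∫⁻ r in Ioo (0:ℝ) c, φ r = ENNReal.ofReal c * ∫⁻ ρ in Ioo (0:ℝ) 1, φ (c * ρ) := by
  have hpre : (fun x : ℝ => c * x) ⁻¹' (Ioo 0 c) = Ioo 0 1 := by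
    ext x
    simp only [mem_preimage, mem_Ioo]
    constructor
    · rintro ⟨h1, h2⟩
      have hx : 0 < x := by
        by_contra h
        push_neg at h
        nlinarith
      exact ⟨hx, by nlinarith⟩
    · rintro ⟨h1, h2⟩
      exact ⟨by positivity, by nlinarith⟩
  have h1 : ∫⁻ ρ in Ioo (0:ℝ) 1, φ (c * ρ)
      = ∫⁻ x in Ioo (0:ℝ) c, φ x ∂(Measure.map (fun x : ℝ => c * x) volume) := by
    rw [Measure.restrict_map (measurable_const_mul c) measurableSet_Ioo, hpre,
      lintegral_map hφ (measurable_const_mul c)]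
  rw [Real.map_volume_mul_left hc.ne'] at h1
  rw [Measure.restrict_smul, lintegral_smul_measure] at h1
  rw [h1, smul_eq_mul, ← mul_assoc, ← ENNReal.ofReal_mul hc.le]
  rw [abs_of_pos (inv_pos.2 hc), mul_inv_cancel₀ hc.ne']
  simp

lemma aux_tail {f : ℝ → ℝ} {F : ℝ} (hFpos : 0 < F) (hFle : ∀ x, f x ≤ F) :
    ∫⁻ r in Ioi (0:ℝ), volume {a | r ≤ f a} = ∫⁻ r in Ioo (0:ℝ) F, volume {a | r ≤ f a} := by
  have hsplit : Ioi (0:ℝ) = Ioo 0 F ∪ Ici F := (Ioo_union_Ici_eq_Ioi hFpos).symm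
  rw [hsplit, lintegral_union measurableSet_Ici (Disjoint.mono_left Set.Ioo_subset_Iio_self (Iio_disjoint_Ici le_rfl))]
  have h2 : ∫⁻ r in Ici F, volume {a | r ≤ f a} = 0 := by
    have h3 : Ici F = {F} ∪ Ioi F := by
      rw [Set.singleton_union, Set.Ioi_insert]
    rw [h3, lintegral_union measurableSet_Ioi (by simp)]
    rw [setLIntegral_measure_zero _ _ (measure_singleton F)]
    have h4 : ∫⁻ r in Ioi F, volume {a | r ≤ f a} = ∫⁻ _ in Ioi F, (0:ℝ≥0∞) := by
      apply setLIntegral_congr_fun measurableSet_Ioi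
      intro r hr
      have : {a : ℝ | r ≤ f a} = ∅ := by
        apply eq_empty_of_forall_notMem
        intro a ha
        exact absurd ha (not_le.2 (lt_of_le_of_lt (hFle a) hr))
      simp [this]
    rw [h4]
    simp
  rw [h2, add_zero]

lemma aux_PL1 {t : ℝ} (ht : 0 < t) (ht1 : t < 1) (f g h : ℝ → ℝ)
    (hfm : Measurable f) (hgm : Measurable g) (hhm : Measurable h)
    (hf0 : ∀ x, 0 ≤ f x) (hg0 : ∀ x, 0 ≤ g x) (hh0 : ∀ x, 0 ≤ h x)
    (hfb : BddAbove (Set.range f)) (hgb : BddAbove (Set.range g))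
    (hyp : ∀ x y, f x ^ t * g y ^ (1 - t) ≤ h (t * x + (1 - t) * y)) :
    (∫⁻ x, ENNReal.ofReal (f x)) ^ t * (∫⁻ x, ENNReal.ofReal (g x)) ^ (1 - t)
      ≤ ∫⁻ x, ENNReal.ofReal (h x) := by
  have h1t : (0:ℝ) < 1 - t := by linarith
  set F := ⨆ x, f x with hF
  set G := ⨆ x, g x with hG
  have hFle : ∀ x, f x ≤ F := fun x => le_ciSup hfb x
  have hGle : ∀ x, g x ≤ G := fun x => le_ciSup hgb x
  have hF0 : 0 ≤ F := (hf0 0).trans (hFle 0)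
  have hG0 : 0 ≤ G := (hg0 0).trans (hGle 0)
  rcases eq_or_lt_of_le hF0 with hFz | hFpos
  · have hfz : ∀ x, f x = 0 := fun x => le_antisymm (hFz ▸ hFle x) (hf0 x)
    have : ∫⁻ x, ENNReal.ofReal (f x) = 0 := by simp [hfz]
    rw [this, ENNReal.zero_rpow_of_pos ht, zero_mul]
    exact zero_le
  rcases eq_or_lt_of_le hG0 with hGz | hGpos
  · have hgz : ∀ x, g x = 0 := fun x => le_antisymm (hGz ▸ hGle x) (hg0 x)
    have : ∫⁻ x, ENNReal.ofReal (g x) = 0 := by simp [hgz]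
    rw [this, ENNReal.zero_rpow_of_pos h1t, mul_zero]
    exact zero_le
  set P := F ^ t * G ^ (1 - t) with hP
  have hPpos : 0 < P := by positivity
  set φf : ℝ → ℝ≥0∞ := fun r => volume {a | r ≤ f a} with hφf
  set φg : ℝ → ℝ≥0∞ := fun r => volume {a | r ≤ g a} with hφg
  set φh : ℝ → ℝ≥0∞ := fun r => volume {a | r ≤ h a} with hφh
  have hφfa : Antitone φf := fun r s hrs =>
    measure_mono (fun a (ha : s ≤ f a) => le_trans hrs ha)
  have hφga : Antitone φg := fun r s hrs =>
    measure_mono (fun a (ha : s ≤ g a) => le_trans hrs ha)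
  have hφha : Antitone φh := fun r s hrs =>
    measure_mono (fun a (ha : s ≤ h a) => le_trans hrs ha)
  have layf : ∫⁻ x, ENNReal.ofReal (f x) = ∫⁻ r in Ioi (0:ℝ), φf r :=
    lintegral_eq_lintegral_meas_le volume (Filter.Eventually.of_forall hf0) hfm.aemeasurable
  have layg : ∫⁻ x, ENNReal.ofReal (g x) = ∫⁻ r in Ioi (0:ℝ), φg r :=
    lintegral_eq_lintegral_meas_le volume (Filter.Eventually.of_forall hg0) hgm.aemeasurable
  have layh : ∫⁻ x, ENNReal.ofReal (h x) = ∫⁻ r in Ioi (0:ℝ), φh r :=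
    lintegral_eq_lintegral_meas_le volume
      (Filter.Eventually.of_forall hh0)
      hhm.aemeasurable
  set Jf := ∫⁻ ρ in Ioo (0:ℝ) 1, φf (F * ρ) with hJf
  set Jg := ∫⁻ ρ in Ioo (0:ℝ) 1, φg (G * ρ) with hJg
  set Jh := ∫⁻ ρ in Ioo (0:ℝ) 1, φh (P * ρ) with hJh
  have repf : ∫⁻ x, ENNReal.ofReal (f x) = ENNReal.ofReal F * Jf := by
    rw [layf, aux_tail hFpos hFle, aux_scale hFpos φf hφfa.measurable]
  have repg : ∫⁻ x, ENNReal.ofReal (g x) = ENNReal.ofReal G * Jg := by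
    rw [layg, aux_tail hGpos hGle, aux_scale hGpos φg hφga.measurable]
  have reph : ENNReal.ofReal P * Jh ≤ ∫⁻ x, ENNReal.ofReal (h x) := by
    rw [layh, ← aux_scale hPpos φh hφha.measurable]
    exact lintegral_mono_set Ioo_subset_Ioi_self
  have key : ∀ ρ ∈ Ioo (0:ℝ) 1,
      ENNReal.ofReal t * φf (F * ρ) + ENNReal.ofReal (1 - t) * φg (G * ρ) ≤ φh (P * ρ) := by
    intro ρ hρ
    obtain ⟨hρ0, hρ1⟩ := hρ
    have hSne : {a : ℝ | F * ρ ≤ f a}.Nonempty := by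
      obtain ⟨x, hx⟩ := exists_lt_of_lt_ciSup (show F * ρ < F by nlinarith)
      exact ⟨x, hx.le⟩
    have hTne : {a : ℝ | G * ρ ≤ g a}.Nonempty := by
      obtain ⟨x, hx⟩ := exists_lt_of_lt_ciSup (show G * ρ < G by nlinarith)
      exact ⟨x, hx.le⟩
    refine aux_oneDim ht ht1 hSne hTne
      (measurableSet_le measurable_const hfm) (measurableSet_le measurable_const hgm) ?_
    intro x hx y hy
    show P * ρ ≤ h (t * x + (1 - t) * y)
    refine le_trans ?_ (hyp x y)
    have e1 : P * ρ = (F * ρ) ^ t * ((G * ρ) ^ (1 - t)) := by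
      rw [Real.mul_rpow hF0 hρ0.le, Real.mul_rpow hG0 hρ0.le]
      have e2 : ρ ^ t * ρ ^ (1 - t) = ρ := by
        rw [← Real.rpow_add hρ0]
        norm_num
      calc P * ρ = (F ^ t * G ^ (1 - t)) * (ρ ^ t * ρ ^ (1 - t)) := by rw [e2]
        _ = F ^ t * ρ ^ t * (G ^ (1 - t) * ρ ^ (1 - t)) := by ring
    rw [e1]
    have h1 : (F * ρ) ^ t ≤ f x ^ t := Real.rpow_le_rpow (by positivity) hx ht.le
    have h2 : (G * ρ) ^ (1 - t) ≤ g y ^ (1 - t) := Real.rpow_le_rpow (by positivity) hy h1t.le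
    exact mul_le_mul h1 h2 (by positivity) (Real.rpow_nonneg (hf0 x) t)
  have hchain : ENNReal.ofReal t * Jf + ENNReal.ofReal (1 - t) * Jg ≤ Jh := by
    have step1 : ∫⁻ ρ in Ioo (0:ℝ) 1,
        (ENNReal.ofReal t * φf (F * ρ) + ENNReal.ofReal (1 - t) * φg (G * ρ)) ≤ Jh := by
      refine setLIntegral_mono (hφha.measurable.comp (measurable_const_mul P)) key
    refine le_trans (le_of_eq ?_) step1
    have m2 : Measurable fun ρ : ℝ => φf (F * ρ) := hφfa.measurable.comp (measurable_const_mul F)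
    have m3 : Measurable fun ρ : ℝ => φg (G * ρ) := hφga.measurable.comp (measurable_const_mul G)
    have m1 : Measurable fun ρ : ℝ => ENNReal.ofReal t * φf (F * ρ) := m2.const_mul _
    rw [lintegral_add_left m1, lintegral_const_mul _ m2, lintegral_const_mul _ m3]
  calc (∫⁻ x, ENNReal.ofReal (f x)) ^ t * (∫⁻ x, ENNReal.ofReal (g x)) ^ (1 - t)
      = (ENNReal.ofReal F * Jf) ^ t * (ENNReal.ofReal G * Jg) ^ (1 - t) := by
        rw [repf, repg]
    _ = (ENNReal.ofReal F) ^ t * (ENNReal.ofReal G) ^ (1 - t) * (Jf ^ t * Jg ^ (1 - t)) := by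
        rw [ENNReal.mul_rpow_of_nonneg _ _ ht.le, ENNReal.mul_rpow_of_nonneg _ _ h1t.le]
        ring
    _ = ENNReal.ofReal P * (Jf ^ t * Jg ^ (1 - t)) := by
        rw [hP, ENNReal.ofReal_mul (by positivity), ENNReal.ofReal_rpow_of_pos hFpos,
          ENNReal.ofReal_rpow_of_pos hGpos]
    _ ≤ ENNReal.ofReal P * (ENNReal.ofReal t * Jf + ENNReal.ofReal (1 - t) * Jg) :=
        mul_le_mul_right (aux_amgm ht ht1 Jf Jg) _
    _ ≤ ENNReal.ofReal P * Jh := mul_le_mul_right hchain _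
    _ ≤ ∫⁻ x, ENNReal.ofReal (h x) := reph

lemma aux_slice_compact {X : Type*} [TopologicalSpace X] [T2Space X]
    {S : Set (ℝ × X)} (hS : IsCompact S) (x : ℝ) : IsCompact {y | (x, y) ∈ S} := by
  refine IsCompact.of_isClosed_subset (hS.image continuous_snd)
    (hS.isClosed.preimage (Continuous.prodMk_right x)) ?_
  intro y hy
  exact ⟨(x, y), hy, rfl⟩

lemma aux_BM_prod {n : ℕ} {t : ℝ} (ht : 0 < t) (ht1 : t < 1)
    (IH : ∀ A B : Set (Fin n → ℝ), IsCompact A → IsCompact B →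
      volume A ^ t * volume B ^ (1 - t) ≤ volume (t • A + (1 - t) • B))
    (A B : Set (ℝ × (Fin n → ℝ))) (hA : IsCompact A) (hB : IsCompact B) :
    volume A ^ t * volume B ^ (1 - t) ≤ volume (t • A + (1 - t) • B) := by
  have h1t : (0:ℝ) < 1 - t := by linarith
  set C := t • A + (1 - t) • B with hCdef
  have hCc : IsCompact C := ((hA.smul t).add (hB.smul (1 - t)))
  have hAm : MeasurableSet A := hA.isClosed.measurableSet
  have hBm : MeasurableSet B := hB.isClosed.measurableSet
  have hCm : MeasurableSet C := hCc.isClosed.measurableSet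
  set f : ℝ → ℝ := fun x => (volume {y | (x, y) ∈ A}).toReal with hf
  set g : ℝ → ℝ := fun x => (volume {y | (x, y) ∈ B}).toReal with hg
  set h : ℝ → ℝ := fun x => (volume {y | (x, y) ∈ C}).toReal with hh
  have hsA : ∀ x, IsCompact {y | (x, y) ∈ A} := fun x => aux_slice_compact hA x
  have hsB : ∀ x, IsCompact {y | (x, y) ∈ B} := fun x => aux_slice_compact hB x
  have hsC : ∀ x, IsCompact {y | (x, y) ∈ C} := fun x => aux_slice_compact hCc x
  have fub : ∀ (S : Set (ℝ × (Fin n → ℝ))), MeasurableSet S →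
      (∀ x, volume {y | (x, y) ∈ S} ≠ ⊤) →
      volume S = ∫⁻ x, ENNReal.ofReal ((volume {y | (x, y) ∈ S}).toReal) := by
    intro S hSm hfin
    rw [MeasureTheory.Measure.volume_eq_prod, Measure.prod_apply hSm]
    exact lintegral_congr fun x => (ENNReal.ofReal_toReal (hfin x)).symm
  have hvolA : volume A = ∫⁻ x, ENNReal.ofReal (f x) :=
    fub A hAm fun x => (hsA x).measure_lt_top.ne
  have hvolB : volume B = ∫⁻ x, ENNReal.ofReal (g x) :=
    fub B hBm fun x => (hsB x).measure_lt_top.ne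
  have hvolC : volume C = ∫⁻ x, ENNReal.ofReal (h x) :=
    fub C hCm fun x => (hsC x).measure_lt_top.ne
  have hfm : Measurable f := (measurable_measure_prodMk_left hAm).ennreal_toReal
  have hgm : Measurable g := (measurable_measure_prodMk_left hBm).ennreal_toReal
  have hhm : Measurable h := (measurable_measure_prodMk_left hCm).ennreal_toReal
  have hf0 : ∀ x, 0 ≤ f x := fun x => ENNReal.toReal_nonneg
  have hg0 : ∀ x, 0 ≤ g x := fun x => ENNReal.toReal_nonneg
  have hh0 : ∀ x, 0 ≤ h x := fun x => ENNReal.toReal_nonneg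
  have hfb : BddAbove (Set.range f) := by
    refine ⟨(volume (Prod.snd '' A)).toReal, ?_⟩
    rintro _ ⟨x, rfl⟩
    refine ENNReal.toReal_mono (hA.image continuous_snd).measure_lt_top.ne
      (measure_mono fun y hy => ⟨(x, y), hy, rfl⟩)
  have hgb : BddAbove (Set.range g) := by
    refine ⟨(volume (Prod.snd '' B)).toReal, ?_⟩
    rintro _ ⟨x, rfl⟩
    refine ENNReal.toReal_mono (hB.image continuous_snd).measure_lt_top.ne
      (measure_mono fun y hy => ⟨(x, y), hy, rfl⟩)
  have hyp : ∀ x y, f x ^ t * g y ^ (1 - t) ≤ h (t * x + (1 - t) * y) := by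
    intro x y
    have key := IH _ _ (hsA x) (hsB y)
    have incl : t • {u | (x, u) ∈ A} + (1 - t) • {v | (y, v) ∈ B}
        ⊆ {w | (t * x + (1 - t) * y, w) ∈ C} := by
      rintro _ ⟨p, ⟨u, hu, rfl⟩, q, ⟨v, hv, rfl⟩, rfl⟩
      show (t * x + (1 - t) * y, t • u + (1 - t) • v) ∈ C
      have : (t * x + (1 - t) * y, t • u + (1 - t) • v)
          = t • ((x, u) : ℝ × (Fin n → ℝ)) + (1 - t) • ((y, v) : ℝ × (Fin n → ℝ)) := rfl
      rw [this, hCdef]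
      exact Set.add_mem_add (Set.smul_mem_smul_set hu) (Set.smul_mem_smul_set hv)
    have step : volume {u | (x, u) ∈ A} ^ t * volume {v | (y, v) ∈ B} ^ (1 - t)
        ≤ volume {w | (t * x + (1 - t) * y, w) ∈ C} := le_trans key (measure_mono incl)
    have := ENNReal.toReal_mono (hsC _).measure_lt_top.ne step
    refine le_trans (le_of_eq ?_) this
    rw [ENNReal.toReal_mul, ← ENNReal.toReal_rpow, ← ENNReal.toReal_rpow]
  rw [hvolA, hvolB, hvolC]
  exact aux_PL1 ht ht1 f g h hfm hgm hhm hf0 hg0 hh0 hfb hgb hyp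

lemma aux_BM : ∀ (n : ℕ) {t : ℝ}, 0 < t → t < 1 →
    ∀ (A B : Set (Fin n → ℝ)), IsCompact A → IsCompact B →
    volume A ^ t * volume B ^ (1 - t) ≤ volume (t • A + (1 - t) • B) := by
  intro n
  induction n with
  | zero =>
    intro t ht ht1 A B hA hB
    have h1t : (0:ℝ) < 1 - t := by linarith
    rcases A.eq_empty_or_nonempty with rfl | hAne
    · simp [ENNReal.zero_rpow_of_pos ht]
    rcases B.eq_empty_or_nonempty with rfl | hBne
    · simp [ENNReal.zero_rpow_of_pos h1t]
    have hsub : Subsingleton (Fin 0 → ℝ) := by infer_instance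
    have hu : ∀ (S : Set (Fin 0 → ℝ)), S.Nonempty → S = univ := by
      intro S hS
      obtain ⟨a, ha⟩ := hS
      ext x
      simp only [mem_univ, iff_true]
      rwa [Subsingleton.elim x a]
    have hA' : A = univ := hu A hAne
    have hB' : B = univ := hu B hBne
    have hC' : t • A + (1 - t) • B = univ :=
      hu _ ((hAne.smul_set).add (hBne.smul_set))
    have h1 : volume (univ : Set (Fin 0 → ℝ)) = 1 := by
      rw [MeasureTheory.volume_pi, Measure.pi_univ]
      simp
    rw [hC', hA', hB', h1, ENNReal.one_rpow, ENNReal.one_rpow, one_mul]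
  | succ n IHn =>
    intro t ht ht1 A B hA hB
    set e := MeasurableEquiv.piFinSuccAbove (fun _ : Fin (n + 1) => ℝ) 0 with he
    set L : ((Fin (n + 1)) → ℝ) →ₗ[ℝ] ℝ × (Fin n → ℝ) :=
      LinearMap.prod (LinearMap.proj 0) (LinearMap.funLeft ℝ ℝ Fin.succ) with hL
    have heL : ∀ x, e x = L x := by
      intro x
      show ((x 0, fun j => x ((0 : Fin (n+1)).succAbove j)) : ℝ × (Fin n → ℝ)) = _
      refine Prod.ext rfl ?_
      funext j
      simp [hL, LinearMap.prod_apply, LinearMap.funLeft_apply]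
    have hLcont : Continuous L := by
      show Continuous fun x : Fin (n+1) → ℝ => ((x 0, fun j : Fin n => x j.succ) : ℝ × (Fin n → ℝ))
      exact (continuous_apply 0).prodMk (continuous_pi fun j => continuous_apply _)
    have hmp : MeasurePreserving e :=
      volume_preserving_piFinSuccAbove (fun _ : Fin (n + 1) => ℝ) 0
    have hvol : ∀ (S : Set (Fin (n+1) → ℝ)), MeasurableSet S → volume (e '' S) = volume S := by
      intro S hSm
      rw [MeasurableEquiv.image_eq_preimage_symm]
      exact (hmp.symm e).measure_preimage hSm.nullMeasurableSet
    have himg : e '' (t • A + (1 - t) • B) = t • (e '' A) + (1 - t) • (e '' B) := by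
      have h1 : e '' (t • A + (1 - t) • B) = L '' (t • A + (1 - t) • B) :=
        Set.image_congr fun x _ => heL x
      have h2 : e '' A = L '' A := Set.image_congr fun x _ => heL x
      have h3 : e '' B = L '' B := Set.image_congr fun x _ => heL x
      rw [h1, h2, h3, Set.image_add, image_smul_set, image_smul_set]
    have hA' : IsCompact (e '' A) := by
      have : e '' A = L '' A := Set.image_congr fun x _ => heL x
      rw [this]; exact hA.image hLcont
    have hB' : IsCompact (e '' B) := by
      have : e '' B = L '' B := Set.image_congr fun x _ => heL x
      rw [this]; exact hB.image hLcont
    have hsum : IsCompact (t • A + (1 - t) • B) := (hA.smul t).add (hB.smul (1 - t))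
    calc volume A ^ t * volume B ^ (1 - t)
        = volume (e '' A) ^ t * volume (e '' B) ^ (1 - t) := by
          rw [hvol A hA.isClosed.measurableSet, hvol B hB.isClosed.measurableSet]
      _ ≤ volume (t • (e '' A) + (1 - t) • (e '' B)) :=
          aux_BM_prod ht ht1 (fun A' B' hA'' hB'' => IHn ht ht1 A' B' hA'' hB'') _ _ hA' hB'
      _ = volume (e '' (t • A + (1 - t) • B)) := by rw [himg]
      _ = volume (t • A + (1 - t) • B) := hvol _ hsum.isClosed.measurableSet

/-- Fubini for slices, ENNReal version. -/
lemma aux_fub {X : Type*} [MeasureSpace X] [SFinite (volume : Measure X)]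
    (S : Set (ℝ × X)) (hSm : MeasurableSet S) :
    volume S = ∫⁻ x, volume {y | (x, y) ∈ S} := by
  rw [MeasureTheory.Measure.volume_eq_prod, Measure.prod_apply hSm]
  rfl

/-- Affine change of variables for lintegrals over ℝ. -/
lemma aux_affine_lintegral {r : ℝ} (hr : 0 < r) (e : ℝ) (φ : ℝ → ℝ≥0∞) (hφ : Measurable φ) :
    ∫⁻ x, φ x = ENNReal.ofReal r * ∫⁻ s, φ (r * s + e) := by
  have hmeas : Measurable fun s : ℝ => r * s + e :=
    (measurable_const_mul r).add_const e
  have hmap : Measure.map (fun s : ℝ => r * s + e) volume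
      = ENNReal.ofReal |r⁻¹| • volume := by
    have hcomp : (fun s : ℝ => r * s + e) = (fun z : ℝ => z + e) ∘ (fun s : ℝ => r * s) := rfl
    rw [hcomp, ← Measure.map_map (measurable_add_const e) (measurable_const_mul r)]
    rw [Real.map_volume_mul_left hr.ne', Measure.map_smul]
    congr 1
    exact map_add_right_eq_self volume e
  have h1 : ∫⁻ s, φ (r * s + e) = ∫⁻ z, φ z ∂(Measure.map (fun s : ℝ => r * s + e) volume) :=
    (lintegral_map hφ hmeas).symm
  rw [h1, hmap, lintegral_smul_measure, smul_eq_mul, ← mul_assoc, ← ENNReal.ofReal_mul hr.le,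
    abs_of_pos (inv_pos.2 hr), mul_inv_cancel₀ hr.ne']
  simp

lemma aux_gain {d : ℕ} {t : ℝ} (ht : 0 < t) (ht1 : t < 1) (b : ℝ)
    (A B : Set (ℝ × (Fin d → ℝ))) (hA : IsCompact A) (hB : IsCompact B) (hAne : A.Nonempty)
    (hslice : ∀ x : ℝ, b ≤ x →
      volume {y | (x, y) ∈ B} ≤
        volume {y | (sSup {x' : ℝ | {y | (x', y) ∈ A}.Nonempty}, y) ∈ A}) :
    volume (t • A + (1 - t) • (B ∩ {p | p.1 ≤ b}))
      + ENNReal.ofReal (1 - t) * volume (B \ {p | p.1 ≤ b})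
      ≤ volume (t • A + (1 - t) • B) := by
  have h1t : (0:ℝ) < 1 - t := by linarith
  set a := sSup {x' : ℝ | {y | (x', y) ∈ A}.Nonempty} with ha
  have hXeq : {x' : ℝ | {y | (x', y) ∈ A}.Nonempty} = Prod.fst '' A := by
    ext x
    constructor
    · rintro ⟨y, hy⟩; exact ⟨(x, y), hy, rfl⟩
    · rintro ⟨p, hp, rfl⟩; exact ⟨p.2, by simpa using hp⟩
  have hfst : IsCompact (Prod.fst '' A) := hA.image continuous_fst
  have hxa : ∀ p ∈ A, p.1 ≤ a := by
    intro p hp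
    rw [ha, hXeq]
    exact le_csSup hfst.bddAbove ⟨p, hp, rfl⟩
  set Aa := {y | (a, y) ∈ A} with hAa
  have hAac : IsCompact Aa := aux_slice_compact hA a
  set Sa : Set (ℝ × (Fin d → ℝ)) := {a} ×ˢ Aa with hSa
  have hSac : IsCompact Sa := isCompact_singleton.prod hAac
  have hSasub : Sa ⊆ A := by
    rintro ⟨x, y⟩ ⟨hx, hy⟩
    have hxa' : x = a := hx
    rw [hxa']
    exact hy
  set Bm := B ∩ {p : ℝ × (Fin d → ℝ) | p.1 ≤ b} with hBm
  set Bp := B \ {p : ℝ × (Fin d → ℝ) | p.1 ≤ b} with hBp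
  have hclosed : IsClosed {p : ℝ × (Fin d → ℝ) | p.1 ≤ b} :=
    isClosed_le continuous_fst continuous_const
  have hBmc : IsCompact Bm := hB.inter_right hclosed
  set U := t • A + (1 - t) • Bm with hU
  set c := t * a + (1 - t) * b with hc
  have hHm : MeasurableSet {p : ℝ × (Fin d → ℝ) | p.1 ≤ c} :=
    (isClosed_le continuous_fst continuous_const).measurableSet
  set Bn : ℕ → Set (ℝ × (Fin d → ℝ)) :=
    fun n => B ∩ {p | b + 1 / (n + 1) ≤ p.1} with hBn
  have hBnc : ∀ n, IsCompact (Bn n) :=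
    fun n => hB.inter_right (isClosed_le continuous_const continuous_fst)
  have hBnmono : Monotone Bn := by
    intro n m hnm p hp
    refine ⟨hp.1, ?_⟩
    have h2 : (1:ℝ) / (m + 1) ≤ 1 / (n + 1) := by
      apply one_div_le_one_div_of_le
      · positivity
      · exact_mod_cast add_le_add_left (Nat.cast_le.2 hnm) 1
    have h3 := hp.2
    simp only [mem_setOf_eq] at h3 ⊢
    linarith
  have hBpU : Bp = ⋃ n, Bn n := by
    ext p
    simp only [hBp, hBn, mem_diff, mem_setOf_eq, mem_iUnion, mem_inter_iff, not_le]
    constructor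
    · rintro ⟨hpB, hpb⟩
      obtain ⟨n, hn⟩ := exists_nat_one_div_lt (show (0:ℝ) < p.1 - b by linarith)
      exact ⟨n, hpB, by linarith⟩
    · rintro ⟨n, hpB, hn⟩
      have h4 : (0:ℝ) < 1 / (n + 1) := by positivity
      exact ⟨hpB, by linarith⟩
  have hBpvol : volume Bp = ⨆ n, volume (Bn n) := by
    rw [hBpU]
    exact hBnmono.measure_iUnion
  have main : ∀ n : ℕ, volume U + ENNReal.ofReal (1 - t) * volume (Bn n)
      ≤ volume (t • A + (1 - t) • B) := by
    intro n
    set Vn := t • Sa + (1 - t) • Bn n with hVn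
    have hVnc : IsCompact Vn := (hSac.smul t).add ((hBnc n).smul (1 - t))
    have hVnm : MeasurableSet Vn := hVnc.isClosed.measurableSet
    have hUsub : U ⊆ t • A + (1 - t) • B :=
      Set.add_subset_add_left (Set.smul_set_mono inter_subset_left)
    have hVsub : Vn ⊆ t • A + (1 - t) • B :=
      Set.add_subset_add (Set.smul_set_mono hSasub) (Set.smul_set_mono inter_subset_left)
    have hUle : U ⊆ {p : ℝ × (Fin d → ℝ) | p.1 ≤ c} := by
      rintro _ ⟨p, ⟨u, hu, rfl⟩, q, ⟨v, hv, rfl⟩, rfl⟩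
      have h1 : u.1 ≤ a := hxa u hu
      have h2 : v.1 ≤ b := hv.2
      show t * u.1 + (1 - t) * v.1 ≤ c
      rw [hc]
      nlinarith
    have hVle : Vn ⊆ {p : ℝ × (Fin d → ℝ) | ¬ p.1 ≤ c} := by
      rintro _ ⟨p, ⟨u, hu, rfl⟩, q, ⟨v, hv, rfl⟩, rfl⟩
      have h1 : u.1 = a := hu.1
      have h2 : b + 1 / (n + 1) ≤ v.1 := hv.2
      show ¬ (t * u.1 + (1 - t) * v.1 ≤ c)
      rw [hc, h1, not_le]
      have h3 : (0:ℝ) < 1 / (n + 1) := by positivity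
      nlinarith
    have hsplit : volume U + volume Vn ≤ volume (t • A + (1 - t) • B) := by
      calc volume U + volume Vn
          ≤ volume ((t • A + (1 - t) • B) ∩ {p : ℝ × (Fin d → ℝ) | p.1 ≤ c})
            + volume ((t • A + (1 - t) • B) \ {p : ℝ × (Fin d → ℝ) | p.1 ≤ c}) := by
            refine add_le_add (measure_mono fun p hp => ⟨hUsub hp, hUle hp⟩)
              (measure_mono fun p hp => ⟨hVsub hp, hVle hp⟩)
        _ = volume (t • A + (1 - t) • B) := measure_inter_add_diff _ hHm
    refine le_trans (add_le_add_right ?_ _) hsplit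
    -- gain : ofReal (1 - t) * volume (Bn n) ≤ volume Vn
    set φ : ℝ → ℝ≥0∞ := fun x => volume {w | (x, w) ∈ Vn} with hφdef
    have hφ : Measurable φ := measurable_measure_prodMk_left hVnm
    have hVfub : volume Vn = ∫⁻ x, φ x := aux_fub Vn hVnm
    have hchg : ∫⁻ x, φ x = ENNReal.ofReal (1 - t) * ∫⁻ s, φ ((1 - t) * s + t * a) :=
      aux_affine_lintegral h1t (t * a) φ hφ
    have hpt : ∀ s : ℝ, volume {v | (s, v) ∈ Bn n} ≤ φ ((1 - t) * s + t * a) := by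
      intro s
      set Bns := {v | (s, v) ∈ Bn n} with hBns
      rcases eq_or_ne (volume Bns) 0 with h0 | hne
      · rw [h0]; exact zero_le
      have hBnsne : Bns.Nonempty := nonempty_of_measure_ne_zero hne
      obtain ⟨v₀, hv₀⟩ := hBnsne
      have hsb : b ≤ s := by
        have h5 : b + 1 / (n + 1) ≤ s := hv₀.2
        have h6 : (0:ℝ) < 1 / (n + 1) := by positivity
        linarith
      have hBnsc : IsCompact Bns := aux_slice_compact (hBnc n) s
      have hincl : t • Aa + (1 - t) • Bns ⊆ {w | ((1 - t) * s + t * a, w) ∈ Vn} := by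
        rintro _ ⟨p, ⟨u, hu, rfl⟩, q, ⟨v, hv, rfl⟩, rfl⟩
        show ((1 - t) * s + t * a, t • u + (1 - t) • v) ∈ Vn
        have heq : (((1 - t) * s + t * a, t • u + (1 - t) • v) : ℝ × (Fin d → ℝ))
            = t • ((a, u) : ℝ × (Fin d → ℝ)) + (1 - t) • ((s, v) : ℝ × (Fin d → ℝ)) := by
          refine Prod.ext ?_ rfl
          show (1 - t) * s + t * a = t * a + (1 - t) * s
          ring
        rw [heq, hVn]
        exact Set.add_mem_add (Set.smul_mem_smul_set ⟨rfl, hu⟩) (Set.smul_mem_smul_set hv)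
      have hle : volume Bns ≤ volume Aa := le_trans
        (measure_mono fun v hv => hv.1) (hslice s hsb)
      calc volume Bns = volume Bns ^ (t + (1 - t)) := by norm_num
        _ = volume Bns ^ t * volume Bns ^ (1 - t) := ENNReal.rpow_add _ _ hne
            hBnsc.measure_lt_top.ne
        _ ≤ volume Aa ^ t * volume Bns ^ (1 - t) :=
            mul_le_mul_left (ENNReal.rpow_le_rpow hle ht.le) _
        _ ≤ volume (t • Aa + (1 - t) • Bns) := aux_BM d ht ht1 _ _ hAac hBnsc
        _ ≤ φ ((1 - t) * s + t * a) := measure_mono hincl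
    calc ENNReal.ofReal (1 - t) * volume (Bn n)
        = ENNReal.ofReal (1 - t) * ∫⁻ s, volume {v | (s, v) ∈ Bn n} := by
          rw [← aux_fub (Bn n) (hBnc n).isClosed.measurableSet]
      _ ≤ ENNReal.ofReal (1 - t) * ∫⁻ s, φ ((1 - t) * s + t * a) :=
          mul_le_mul_right (lintegral_mono hpt) _
      _ = volume Vn := by rw [hVfub, hchg]
  rw [hBpvol, ENNReal.mul_iSup, ENNReal.add_iSup]
  exact iSup_le main

lemma aux_quad : ∀ u v : ℝ, 0 ≤ u → u ≤ 1/4 → 0 ≤ v → v ≤ 1/4 →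
    1 + u ≤ (1 + 5 * u + 4 * v) * (1 - u - v) := by
  intro u v hu0 hu4 hv0 hv4
  nlinarith [mul_nonneg (by linarith : (0:ℝ) ≤ 1/4 - u) hv0,
    mul_nonneg hu0 (by linarith : (0:ℝ) ≤ 1/4 - v),
    mul_nonneg (by linarith : (0:ℝ) ≤ 1/4 - u) hu0,
    mul_nonneg (by linarith : (0:ℝ) ≤ 1/4 - v) hv0]

lemma aux_e4 : ∀ t v u : ℝ, 0 ≤ t * v * (5 * u + 4 * v) →
    (1 - t) * v * (5 * u + 4 * v) ≤ 5 * u * v + 4 * v ^ 2 := by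
  intro t v u h
  nlinarith [h]

lemma aux_e5 : ∀ u v : ℝ, 0 ≤ u * (2 - 5 * v) → 5 * u * v ≤ 2 * u := by
  intro u v h
  nlinarith [h]

set_option maxHeartbeats 1000000 in
lemma aux_arith {C₁ δ t α β βm βp uR C : ℝ} (hC₁ : 0 < C₁) (hδ0 : 0 < δ) (hδ1 : δ ≤ 1)
    (ht : 0 < t) (ht1 : t < 1) (hαnn : 0 ≤ α) (hβm : 0 ≤ βm) (hβp : 0 ≤ βp)
    (hα : |α - 1| ≤ C₁ * δ) (hβ : |β - 1| ≤ C₁ * δ) (hsum : βm + βp = β)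
    (hC1 : 1 + 2 * C₁ ≤ C) (hC2 : 4 ≤ C) (hC3 : 4 * C₁ * ((1 + C₁) ^ 2 + 1) ≤ C)
    (hC4 : 16 * ((1 + C₁) ^ 2 + 1) ≤ C)
    (hmain : uR + (1 - t) * βp < α ^ t * β ^ (1 - t) + δ) :
    uR < α ^ t * βm ^ (1 - t) + C * δ + C * βp ^ 2 := by
  have h1t : (0:ℝ) < 1 - t := by linarith
  obtain ⟨hα1, hα2⟩ := abs_le.1 hα
  obtain ⟨hβ1, hβ2⟩ := abs_le.1 hβ
  have hC₁δ : C₁ * δ ≤ C₁ := by nlinarith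
  have hαup : α ≤ 1 + C₁ := by linarith
  have hβnn : 0 ≤ β := by linarith
  have hβup : β ≤ 1 + C₁ := by linarith
  have hαtnn : 0 ≤ α ^ t := Real.rpow_nonneg hαnn t
  have hβ1tnn : 0 ≤ β ^ (1 - t) := Real.rpow_nonneg hβnn (1 - t)
  have hβm1tnn : 0 ≤ βm ^ (1 - t) := Real.rpow_nonneg hβm (1 - t)
  have hαt : α ^ t ≤ 1 + C₁ := by
    rcases le_or_gt α 1 with h | h
    · exact (Real.rpow_le_one hαnn h ht.le).trans (by linarith)
    · calc α ^ t ≤ α ^ (1:ℝ) := Real.rpow_le_rpow_of_exponent_le h.le ht1.le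
        _ = α := Real.rpow_one _
        _ ≤ 1 + C₁ := hαup
  have hβ1t : β ^ (1 - t) ≤ 1 + C₁ := by
    rcases le_or_gt β 1 with h | h
    · exact (Real.rpow_le_one hβnn h h1t.le).trans (by linarith)
    · calc β ^ (1 - t) ≤ β ^ (1:ℝ) := Real.rpow_le_rpow_of_exponent_le h.le (by linarith)
        _ = β := Real.rpow_one _
        _ ≤ 1 + C₁ := hβup
  have hprod : α ^ t * β ^ (1 - t) ≤ (1 + C₁) ^ 2 := by nlinarith
  have huR : uR < (1 + C₁) ^ 2 + 1 := by nlinarith [mul_nonneg h1t.le hβp]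
  have hCpos : (0:ℝ) < C := lt_of_lt_of_le (by norm_num) hC2
  have hterm1 : 0 ≤ α ^ t * βm ^ (1 - t) := mul_nonneg hαtnn hβm1tnn
  have epos : (0:ℝ) < (1 + C₁) ^ 2 + 1 := by positivity
  have hCb2 : 0 ≤ C * βp ^ 2 := mul_nonneg hCpos.le (sq_nonneg βp)
  have hCd : 0 < C * δ := mul_pos hCpos hδ0
  by_cases hu : 1/4 < C₁ * δ
  · have hbig : ((1 + C₁) ^ 2 + 1) < C * δ := by
      have e1 : 4 * C₁ * ((1 + C₁) ^ 2 + 1) * δ ≤ C * δ :=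
        mul_le_mul_of_nonneg_right hC3 hδ0.le
      have e2 : ((1 + C₁) ^ 2 + 1) < 4 * (C₁ * δ) * ((1 + C₁) ^ 2 + 1) := by nlinarith
      calc ((1 + C₁) ^ 2 + 1) < 4 * (C₁ * δ) * ((1 + C₁) ^ 2 + 1) := e2
        _ = 4 * C₁ * ((1 + C₁) ^ 2 + 1) * δ := by ring
        _ ≤ C * δ := e1
    linarith
  by_cases hv : 1/4 < βp
  · have hbig : ((1 + C₁) ^ 2 + 1) < C * βp ^ 2 := by
      have e1 : 16 * ((1 + C₁) ^ 2 + 1) * βp ^ 2 ≤ C * βp ^ 2 :=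
        mul_le_mul_of_nonneg_right hC4 (sq_nonneg βp)
      have e3 : 1/16 < βp ^ 2 := by nlinarith
      have e2 : ((1 + C₁) ^ 2 + 1) < 16 * ((1 + C₁) ^ 2 + 1) * βp ^ 2 := by nlinarith
      linarith
    linarith
  push_neg at hu hv
  have hβlow : 1 - C₁ * δ ≤ β := by linarith
  have hβmlow : (1:ℝ)/2 ≤ βm := by linarith
  have hβmpos : (0:ℝ) < βm := by linarith
  set z := βp / βm with hz
  have hz0 : 0 ≤ z := div_nonneg hβp hβmpos.le
  have hBern : (1 + z) ^ (1 - t) ≤ 1 + (1 - t) * z :=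
    rpow_one_add_le_one_add_mul_self (by linarith) h1t.le (by linarith)
  have hfact : β = βm * (1 + z) := by
    rw [hz]
    field_simp
    linarith
  have h1 : β ^ (1 - t) = βm ^ (1 - t) * (1 + z) ^ (1 - t) := by
    rw [hfact, Real.mul_rpow hβmpos.le (by linarith)]
  have h2 : β ^ (1 - t) ≤ βm ^ (1 - t) + (1 - t) * (βm ^ (1 - t) * z) := by
    rw [h1]
    nlinarith [hBern, hβm1tnn]
  have h3 : βm ^ (1 - t) * z = βp * (βm ^ t)⁻¹ := by
    have hsplit : βm ^ (1 - t) = βm * (βm ^ t)⁻¹ := by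
      rw [show (1:ℝ) - t = 1 + (-t) by ring, Real.rpow_add hβmpos, Real.rpow_one,
        Real.rpow_neg hβmpos.le]
    rw [hsplit, hz]
    field_simp
  have hβmtpos : (0:ℝ) < βm ^ t := Real.rpow_pos_of_pos hβmpos t
  have hratio : α ^ t * (βm ^ t)⁻¹ ≤ 1 + 5 * (C₁ * δ) + 4 * βp := by
    have h4 : α ^ t * (βm ^ t)⁻¹ = (α / βm) ^ t := by
      rw [Real.div_rpow hαnn hβmpos.le, div_eq_mul_inv]
    rw [h4]
    have hCδ0 : 0 ≤ C₁ * δ := by positivity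
    rcases le_or_gt (α / βm) 1 with hle | hgt
    · have h5 : (α / βm) ^ t ≤ 1 := Real.rpow_le_one (by positivity) hle ht.le
      nlinarith
    · have h5 : (α / βm) ^ t ≤ α / βm := by
        calc (α / βm) ^ t ≤ (α / βm) ^ (1:ℝ) :=
            Real.rpow_le_rpow_of_exponent_le hgt.le ht1.le
          _ = α / βm := Real.rpow_one _
      refine h5.trans ?_
      rw [div_le_iff₀ hβmpos]
      have hβmlow2 : 1 - C₁ * δ - βp ≤ βm := by linarith
      have hkey : 1 + C₁ * δ ≤ (1 + 5 * (C₁ * δ) + 4 * βp) * (1 - C₁ * δ - βp) :=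
        aux_quad _ _ hCδ0 hu hβp hv
      have hmul : (1 + 5 * (C₁ * δ) + 4 * βp) * (1 - C₁ * δ - βp)
          ≤ (1 + 5 * (C₁ * δ) + 4 * βp) * βm :=
        mul_le_mul_of_nonneg_left hβmlow2 (by linarith)
      linarith
  have hmix : α ^ t * β ^ (1 - t)
      ≤ α ^ t * βm ^ (1 - t) + (1 - t) * βp * (1 + 5 * (C₁ * δ) + 4 * βp) := by
    have h6 : α ^ t * β ^ (1 - t) ≤ α ^ t * (βm ^ (1 - t) + (1 - t) * (βp * (βm ^ t)⁻¹)) := by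
      rw [← h3]
      exact mul_le_mul_of_nonneg_left h2 hαtnn
    have h7 : α ^ t * (βm ^ (1 - t) + (1 - t) * (βp * (βm ^ t)⁻¹))
        = α ^ t * βm ^ (1 - t) + (1 - t) * βp * (α ^ t * (βm ^ t)⁻¹) := by ring
    have h8 : (1 - t) * βp * (α ^ t * (βm ^ t)⁻¹)
        ≤ (1 - t) * βp * (1 + 5 * (C₁ * δ) + 4 * βp) :=
      mul_le_mul_of_nonneg_left hratio (mul_nonneg h1t.le hβp)
    linarith [h6, h7 ▸ h6]
  -- final combination
  have hCδ0 : 0 ≤ C₁ * δ := by positivity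
  have e4' : 0 ≤ t * βp * (5 * (C₁ * δ) + 4 * βp) :=
    mul_nonneg (mul_nonneg ht.le hβp) (by linarith)
  have e4 : (1 - t) * βp * (5 * (C₁ * δ) + 4 * βp) ≤ 5 * (C₁ * δ) * βp + 4 * βp ^ 2 :=
    aux_e4 t βp (C₁ * δ) e4'
  have e5 : 5 * (C₁ * δ) * βp ≤ 2 * (C₁ * δ) :=
    aux_e5 (C₁ * δ) βp (mul_nonneg hCδ0 (show (0:ℝ) ≤ 2 - 5 * βp by linarith))
  have e6 : (1 + 2 * C₁) * δ ≤ C * δ := mul_le_mul_of_nonneg_right hC1 hδ0.le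
  have e7 : 4 * βp ^ 2 ≤ C * βp ^ 2 := mul_le_mul_of_nonneg_right hC2 (sq_nonneg βp)
  have hid : (1 - t) * βp * (1 + 5 * (C₁ * δ) + 4 * βp)
      = (1 - t) * βp + (1 - t) * βp * (5 * (C₁ * δ) + 4 * βp) := by ring
  linarith [hmain, hmix, hid, e4, e5, e6, e7]

/-- Lemma (localization, Lemma 3.3 of the paper), with the `O(·)` constants made explicit:
for each compact `Λ ⊆ (0,1)` and constant `C₁` governing the hypotheses `|A|,|B| = 1 + O(δ)`,
there is a uniform constant `C` for the conclusion's `O(δ) + O(|B⁺|²)` error. -/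
theorem stmt8 (d : ℕ) (hd : 0 < d) (Λ : Set ℝ) (hΛ : IsCompact Λ) (hΛsub : Λ ⊆ Set.Ioo 0 1)
    (C₁ : ℝ) (hC₁ : 0 < C₁) :
    ∃ C : ℝ, 0 < C ∧ ∀ δ : ℝ, 0 < δ → δ ≤ 1 →
      ∀ A B : Set (ℝ × (Fin d → ℝ)), ∀ t ∈ Λ, ∀ b : ℝ,
        IsCompact A → IsCompact B → A.Nonempty →
        |(volume A).toReal - 1| ≤ C₁ * δ →
        |(volume B).toReal - 1| ≤ C₁ * δ →
        (∀ x : ℝ, b ≤ x →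
          volume {y | (x, y) ∈ B} ≤
            volume {y | (sSup {x' : ℝ | {y | (x', y) ∈ A}.Nonempty}, y) ∈ A}) →
        volume (t • A + (1 - t) • B) <
          ENNReal.ofReal ((volume A).toReal ^ t * (volume B).toReal ^ (1 - t) + δ) →
        volume (t • A + (1 - t) • (B ∩ {p | p.1 ≤ b})) <
          ENNReal.ofReal ((volume A).toReal ^ t
            * (volume (B ∩ {p | p.1 ≤ b})).toReal ^ (1 - t)
            + C * δ + C * (volume (B \ {p | p.1 ≤ b})).toReal ^ 2) := by
  refine ⟨(4 * C₁ + 16) * ((1 + C₁) ^ 2 + 1) + 2 * C₁ + 5, by positivity, ?_⟩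
  set C := (4 * C₁ + 16) * ((1 + C₁) ^ 2 + 1) + 2 * C₁ + 5 with hCdef
  have hC1 : 1 + 2 * C₁ ≤ C := by nlinarith [sq_nonneg (1 + C₁), hC₁.le]
  have hC2 : (4:ℝ) ≤ C := by nlinarith [sq_nonneg (1 + C₁), hC₁.le]
  have hC3 : 4 * C₁ * ((1 + C₁) ^ 2 + 1) ≤ C := by nlinarith [sq_nonneg (1 + C₁), hC₁.le]
  have hC4 : 16 * ((1 + C₁) ^ 2 + 1) ≤ C := by nlinarith [sq_nonneg (1 + C₁), hC₁.le]
  intro δ hδ0 hδ1 A B t htΛ b hA hB hAne hvolA hvolB hslice hmain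
  obtain ⟨ht0, ht1⟩ := hΛsub htΛ
  have h1t : (0:ℝ) < 1 - t := by linarith
  set Bm := B ∩ {p : ℝ × (Fin d → ℝ) | p.1 ≤ b} with hBmdef
  set Bp := B \ {p : ℝ × (Fin d → ℝ) | p.1 ≤ b} with hBpdef
  have hclosed : IsClosed {p : ℝ × (Fin d → ℝ) | p.1 ≤ b} :=
    isClosed_le continuous_fst continuous_const
  have hgain := aux_gain ht0 ht1 b A B hA hB hAne hslice
  have hfull_ne : volume (t • A + (1 - t) • B) ≠ ⊤ := hmain.ne_top
  have hUsub : t • A + (1 - t) • Bm ⊆ t • A + (1 - t) • B :=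
    Set.add_subset_add_left (Set.smul_set_mono inter_subset_left)
  have hUle : volume (t • A + (1 - t) • Bm) ≤ volume (t • A + (1 - t) • B) :=
    measure_mono hUsub
  have hUne : volume (t • A + (1 - t) • Bm) ≠ ⊤ := ne_top_of_le_ne_top hfull_ne hUle
  have hBfin : volume B ≠ ⊤ := hB.measure_lt_top.ne
  have hBm_ne : volume Bm ≠ ⊤ := ne_top_of_le_ne_top hBfin (measure_mono inter_subset_left)
  have hBp_ne : volume Bp ≠ ⊤ := ne_top_of_le_ne_top hBfin (measure_mono diff_subset)
  have hterm_ne : ENNReal.ofReal (1 - t) * volume Bp ≠ ⊤ :=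
    ENNReal.mul_ne_top ENNReal.ofReal_ne_top hBp_ne
  have hsum_ne : volume (t • A + (1 - t) • Bm) + ENNReal.ofReal (1 - t) * volume Bp ≠ ⊤ :=
    ENNReal.add_ne_top.2 ⟨hUne, hterm_ne⟩
  have hcomb : volume (t • A + (1 - t) • Bm) + ENNReal.ofReal (1 - t) * volume Bp
      < ENNReal.ofReal ((volume A).toReal ^ t * (volume B).toReal ^ (1 - t) + δ) :=
    lt_of_le_of_lt hgain hmain
  have hlt := (ENNReal.lt_ofReal_iff_toReal_lt hsum_ne).1 hcomb
  rw [ENNReal.toReal_add hUne hterm_ne, ENNReal.toReal_mul,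
    ENNReal.toReal_ofReal h1t.le] at hlt
  have hmsum : volume Bm + volume Bp = volume B :=
    measure_inter_add_diff B hclosed.measurableSet
  have hβsum : (volume Bm).toReal + (volume Bp).toReal = (volume B).toReal := by
    rw [← ENNReal.toReal_add hBm_ne hBp_ne, hmsum]
  rw [ENNReal.lt_ofReal_iff_toReal_lt hUne]
  exact aux_arith hC₁ hδ0 hδ1 ht0 ht1 ENNReal.toReal_nonneg ENNReal.toReal_nonneg
    ENNReal.toReal_nonneg hvolA hvolB hβsum hC1 hC2 hC3 hC4 hlt
end

section
/- Let A, B ⊆ ℝ^d be compact, t ∈ (0,1), and suppose A contains a slice {x₀} × E with E ⊆ ℝ^{d-1} compact of measure |E| ≥ 1/2. If |tA + (1-t)B| < 1 + δ with δ ≤ 1, then the one-dimensional measure of the projection π(B) of B to the first coordinate satisfies |π(B)| ≤ 2·(1+δ)/((1-t)·t^{d-1}·|E|) ≤ 4/((1-t)t^{d-1}). -/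
open MeasureTheory Set
open scoped Pointwise ENNReal

theorem stmt9 (n : ℕ) (A B : Set (ℝ × (Fin n → ℝ))) (t : ℝ) (ht : t ∈ Set.Ioo (0:ℝ) 1)
    (hA : IsCompact A) (hB : IsCompact B)
    (x₀ : ℝ) (E : Set (Fin n → ℝ)) (hE : IsCompact E)
    (hEsub : ({x₀} : Set ℝ) ×ˢ E ⊆ A)
    (hEvol : (1:ℝ)/2 ≤ (volume E).toReal)
    (δ : ℝ) (hδ0 : 0 < δ) (hδ1 : δ ≤ 1)
    (hsum : volume (t • A + (1 - t) • B) < ENNReal.ofReal (1 + δ)) :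
    (volume (Prod.fst '' B)).toReal ≤ 2 * (1 + δ) / ((1 - t) * t ^ n * (volume E).toReal) ∧
    (volume (Prod.fst '' B)).toReal ≤ 4 / ((1 - t) * t ^ n) := by
  obtain ⟨ht0, ht1⟩ := ht
  have ht1' : (0:ℝ) < 1 - t := by linarith
  set S := t • A + (1 - t) • B with hS_def
  have hScompact : IsCompact S := (hA.smul t).add (hB.smul (1 - t))
  have hSmeas : MeasurableSet S := hScompact.measurableSet
  set P := Prod.fst '' B with hP_def
  have hPcompact : IsCompact P := hB.image continuous_fst
  have hQcompact : IsCompact ((fun x => t * x₀ + (1 - t) * x) '' P) :=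
    hPcompact.image (by continuity)
  set Q := (fun x => t * x₀ + (1 - t) * x) '' P with hQ_def
  have hQmeas : MeasurableSet Q := hQcompact.measurableSet
  -- slice bound
  have hslice : ∀ x ∈ Q, ENNReal.ofReal (t ^ n) * volume E ≤ volume (Prod.mk x ⁻¹' S) := by
    rintro x ⟨x', ⟨b, hbB, rfl⟩, rfl⟩
    have hsub : ((1 - t) • b.2) +ᵥ (t • E) ⊆ Prod.mk (t * x₀ + (1 - t) * b.1) ⁻¹' S := by
      rintro y ⟨z, ⟨e, heE, rfl⟩, rfl⟩
      have haA : ((x₀, e) : ℝ × (Fin n → ℝ)) ∈ A := hEsub (by simp [heE])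
      have : t • ((x₀, e) : ℝ × (Fin n → ℝ)) + (1 - t) • b ∈ S :=
        Set.add_mem_add (Set.smul_mem_smul_set haA) (Set.smul_mem_smul_set hbB)
      simpa [Prod.ext_iff, Prod.smul_def, add_comm] using this
    calc ENNReal.ofReal (t ^ n) * volume E
        = volume (((1 - t) • b.2) +ᵥ (t • E)) := by
          rw [measure_vadd, Measure.addHaar_smul]
          congr 2
          rw [Module.finrank_fin_fun ℝ, abs_of_pos (pow_pos ht0 n)]
      _ ≤ volume (Prod.mk (t * x₀ + (1 - t) * b.1) ⁻¹' S) := measure_mono hsub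
  -- Fubini lower bound
  have key : ENNReal.ofReal (t ^ n) * volume E * volume Q ≤ volume S := by
    calc ENNReal.ofReal (t ^ n) * volume E * volume Q
        = ∫⁻ _ in Q, ENNReal.ofReal (t ^ n) * volume E := (setLIntegral_const _ _).symm
      _ ≤ ∫⁻ x in Q, volume (Prod.mk x ⁻¹' S) := setLIntegral_mono' hQmeas hslice
      _ ≤ ∫⁻ x, volume (Prod.mk x ⁻¹' S) := setLIntegral_le_lintegral _ _
      _ = volume S := by
          rw [MeasureTheory.Measure.volume_eq_prod, Measure.prod_apply hSmeas]
  -- compute volume Q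
  have hQvol : volume Q = ENNReal.ofReal (1 - t) * volume P := by
    have hQeq : Q = (t * x₀) +ᵥ ((1 - t) • P) := by
      ext y
      simp only [hQ_def, Set.mem_image, Set.mem_vadd_set, Set.mem_smul_set]
      constructor
      · rintro ⟨x, hx, rfl⟩; exact ⟨(1 - t) * x, ⟨x, hx, rfl⟩, rfl⟩
      · rintro ⟨z, ⟨x, hx, rfl⟩, rfl⟩; exact ⟨x, hx, rfl⟩
    rw [hQeq, measure_vadd, Measure.addHaar_smul]
    congr 2
    simp [abs_of_pos ht1']
  -- finiteness
  have hEfin : volume E ≠ ∞ := hE.measure_lt_top.ne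
  have hPfin : volume P ≠ ∞ := hPcompact.measure_lt_top.ne
  -- pass to reals
  have hlt : ENNReal.ofReal (t ^ n) * volume E * (ENNReal.ofReal (1 - t) * volume P)
      < ENNReal.ofReal (1 + δ) := by
    rw [← hQvol]; exact lt_of_le_of_lt key hsum
  have hfin : ENNReal.ofReal (t ^ n) * volume E * (ENNReal.ofReal (1 - t) * volume P) ≠ ∞ :=
    hlt.trans ENNReal.ofReal_lt_top |>.ne
  have hreal : t ^ n * (volume E).toReal * ((1 - t) * (volume P).toReal) < 1 + δ := by
    have := (ENNReal.lt_ofReal_iff_toReal_lt hfin).mp hlt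
    simpa [ENNReal.toReal_mul, ENNReal.toReal_ofReal (pow_nonneg ht0.le n),
      ENNReal.toReal_ofReal ht1'.le] using this
  set vE := (volume E).toReal with hvE
  set vP := (volume P).toReal with hvP
  have hvE0 : (0:ℝ) < vE := by linarith
  have hvP0 : (0:ℝ) ≤ vP := ENNReal.toReal_nonneg
  have htn : (0:ℝ) < t ^ n := pow_pos ht0 n
  constructor
  · rw [le_div_iff₀ (by positivity)]
    nlinarith
  · rw [le_div_iff₀ (by positivity)]
    nlinarith [mul_nonneg (mul_nonneg ht1'.le htn.le) hvP0,
      mul_le_mul_of_nonneg_right hEvol (mul_nonneg (mul_nonneg ht1'.le htn.le) hvP0)]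
end
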